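/- arXiv:1210.3932 — 5 statements merged into one kernel-verified Lean document; each statement's English description precedes it below -/
import Mathlib

section
/- For any function f from [a,b] to a metric space (E,ρ), any c > 0, and any function g : [a,b] → E with sup_{t∈[a,b]} ρ(f(t),g(t)) ≤ c/2, the total variation of g is at least the truncated variation of f at level c: TV(g,[a,b]) ≥ TV^c(f,[a,b]). -/
open Set Filter

/-- A finite partition `t 0 < t 1 < ... < t n` of points in `[a, b]`. -/
def IsPart (a b : ℝ) (n : ℕ) (t : ℕ → ℝ) : Prop :=
  a ≤ t 0 ∧ t n ≤ b ∧ ∀ i < n, t i < t (i + 1)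

/-- Total variation of `f` on `[a, b]`. -/
noncomputable def TVar {E : Type*} [PseudoMetricSpace E] (f : ℝ → E) (a b : ℝ) : ENNReal :=
  ⨆ (n : ℕ) (t : ℕ → ℝ) (_ : IsPart a b n t),
    ∑ i ∈ Finset.range n, ENNReal.ofReal (dist (f (t (i + 1))) (f (t i)))

/-- Truncated variation of `f` at level `c` on `[a, b]`. -/
noncomputable def TVc {E : Type*} [PseudoMetricSpace E] (f : ℝ → E) (c a b : ℝ) : ENNReal :=
  ⨆ (n : ℕ) (t : ℕ → ℝ) (_ : IsPart a b n t),
    ∑ i ∈ Finset.range n, ENNReal.ofReal (dist (f (t (i + 1))) (f (t i)) - c)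

/-- Upward truncated variation. -/
noncomputable def UTVc (f : ℝ → ℝ) (c a b : ℝ) : ENNReal :=
  ⨆ (n : ℕ) (t : ℕ → ℝ) (_ : IsPart a b n t),
    ∑ i ∈ Finset.range n, ENNReal.ofReal (f (t (i + 1)) - f (t i) - c)

/-- Downward truncated variation. -/
noncomputable def DTVc (f : ℝ → ℝ) (c a b : ℝ) : ENNReal :=
  ⨆ (n : ℕ) (t : ℕ → ℝ) (_ : IsPart a b n t),
    ∑ i ∈ Finset.range n, ENNReal.ofReal (f (t i) - f (t (i + 1)) - c)

/-- `f` is càdlàg on `[a, b]`: right-continuous on `[a, b)`, with left limits on `(a, b]`. -/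
def Cadlag {E : Type*} [TopologicalSpace E] (f : ℝ → E) (a b : ℝ) : Prop :=
  (∀ t ∈ Set.Ico a b, Tendsto f (nhdsWithin t (Set.Ioi t)) (nhds (f t))) ∧
  (∀ t ∈ Set.Ioc a b, ∃ l, Tendsto f (nhdsWithin t (Set.Iio t)) (nhds l))

/-- Any `g` uniformly within `c/2` of `f` has total variation at least the
truncated variation of `f` at level `c`. -/
theorem tv_ge_tvc {E : Type*} [PseudoMetricSpace E] (a b : ℝ) (hab : a < b)
    (f g : ℝ → E) (c : ℝ) (hc : 0 < c)
    (hg : ∀ t ∈ Set.Icc a b, dist (f t) (g t) ≤ c / 2) :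
    TVc f c a b ≤ TVar g a b := by
  refine iSup_le fun n => iSup_le fun t => iSup_le fun ht => ?_
  refine le_trans ?_ (le_iSup_of_le n (le_iSup_of_le t (le_iSup_of_le ht le_rfl)))
  obtain ⟨h0, hn, hmono⟩ := ht
  have hmem : ∀ i ≤ n, t i ∈ Set.Icc a b := by
    intro i hi
    have mono : ∀ j k, j ≤ k → k ≤ n → t j ≤ t k := by
      intro j k hjk hkn
      induction k with
      | zero => simp_all
      | succ k ih =>
        rcases Nat.lt_or_ge j (k+1) with h | h
        · exact le_trans (ih (Nat.lt_succ_iff.mp h) (le_trans (Nat.le_succ k) hkn))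
            (le_of_lt (hmono k (Nat.lt_of_succ_le hkn)))
        · have : j = k + 1 := le_antisymm hjk h
          simp [this]
    exact ⟨le_trans h0 (mono 0 i (Nat.zero_le i) hi), le_trans (mono i n hi le_rfl) hn⟩
  refine Finset.sum_le_sum fun i hi => ?_
  have hin : i < n := Finset.mem_range.mp hi
  apply ENNReal.ofReal_le_ofReal
  have h1 := hg (t (i+1)) (hmem (i+1) hin)
  have h2 := hg (t i) (hmem i hin.le)
  have := dist_triangle4 (f (t (i+1))) (g (t (i+1))) (g (t i)) (f (t i))
  rw [dist_comm (g (t i)) (f (t i))] at this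
  linarith
end

section
/- For every càdlàg function f : [a,b] → E into a metric space and every c > 0, the truncated variation TV^c(f,[a,b]) is finite. -/
open Set Filter

section Key
variable {E : Type*} [MetricSpace E] (f : ℝ → E) (a : ℝ) (ε : ℝ)

/-- There is a partition of `[a, r]` into intervals on which `f` oscillates less than `ε`. -/
def GoodPt (r : ℝ) : Prop :=
  ∃ n, ∃ s : ℕ → ℝ, Monotone s ∧ s 0 = a ∧ (∀ k, n ≤ k → s k = r) ∧
    ∀ k, ∀ x y : ℝ, s k ≤ x → x < s (k + 1) → s k ≤ y → y < s (k + 1) →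
      dist (f x) (f y) < ε

lemma goodPt_self : GoodPt f a ε a := by
  refine ⟨0, fun _ => a, monotone_const, rfl, fun _ _ => rfl, ?_⟩
  intro k x y h1 h2 _ _
  exact absurd (h1.trans_lt h2) (lt_irrefl a)

lemma goodPt_append {t v : ℝ} (ht : GoodPt f a ε t) (htv : t ≤ v)
    (hosc : ∀ x y : ℝ, t ≤ x → x < v → t ≤ y → y < v → dist (f x) (f y) < ε) :
    GoodPt f a ε v := by
  obtain ⟨n, s, hmono, h0, hconst, hs⟩ := ht
  refine ⟨n + 1, fun k => if k ≤ n then s k else v, ?_, ?_, ?_, ?_⟩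
  · apply monotone_nat_of_le_succ
    intro k
    by_cases h2 : k + 1 ≤ n
    · have h1 : k ≤ n := by omega
      simp only [if_pos h1, if_pos h2]
      exact hmono (Nat.le_succ k)
    · by_cases h1 : k ≤ n
      · have hk : k = n := by omega
        subst hk
        simp only [if_pos h1, if_neg h2, hconst k le_rfl]
        exact htv
      · simp only [if_neg h1, if_neg h2, le_refl]
  · simp [Nat.zero_le n, h0]
  · intro k hk
    have : ¬ k ≤ n := by omega
    simp [this]
  · intro k x y hx1 hx2 hy1 hy2
    rcases lt_or_ge k n with h | h
    · have h1 : k ≤ n := h.le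
      have h2 : k + 1 ≤ n := h
      simp only [if_pos h1, if_pos h2] at hx1 hx2 hy1 hy2
      exact hs k x y hx1 hx2 hy1 hy2
    · rcases eq_or_lt_of_le h with heq | h'
      · subst heq
        simp only [if_pos le_rfl, if_neg (Nat.not_succ_le_self n), hconst n le_rfl]
          at hx1 hx2 hy1 hy2
        exact hosc x y hx1 hx2 hy1 hy2
      · have h1 : ¬ k ≤ n := not_le.mpr h'
        have h2 : ¬ k + 1 ≤ n := by omega
        simp only [if_neg h1, if_neg h2] at hx1 hx2
        exact absurd (hx1.trans_lt hx2) (lt_irrefl v)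

/-- Key lemma: a càdlàg function on `[a, b]` admits a finite partition into
left-closed right-open intervals on which it oscillates less than `ε`. -/
lemma exists_good_partition {b : ℝ} (hab : a < b) (hf : Cadlag f a b) (hε : 0 < ε) :
    GoodPt f a ε b := by
  set A : Set ℝ := {r | r ∈ Icc a b ∧ GoodPt f a ε r} with hA
  have haA : a ∈ A := ⟨⟨le_rfl, hab.le⟩, goodPt_self f a ε⟩
  have hbdd : BddAbove A := ⟨b, fun r hr => hr.1.2⟩
  have hne : A.Nonempty := ⟨a, haA⟩
  set u := sSup A with hu
  have hau : a ≤ u := le_csSup hbdd haA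
  have hub : u ≤ b := csSup_le hne fun r hr => hr.1.2
  have hPu : GoodPt f a ε u := by
    rcases eq_or_lt_of_le hau with heq | hau'
    · exact heq ▸ goodPt_self f a ε
    · obtain ⟨l, hl⟩ := hf.2 u ⟨hau', hub⟩
      have hev : ∀ᶠ x in nhdsWithin u (Iio u), dist (f x) l < ε / 2 :=
        hl (Metric.ball_mem_nhds l (by positivity))
      obtain ⟨w, hw, hsub⟩ := mem_nhdsLT_iff_exists_Ioo_subset.mp hev
      obtain ⟨r, hrA, hr⟩ := exists_lt_of_lt_csSup hne (show max w a < u from max_lt hw hau')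
      have hru : r ≤ u := le_csSup hbdd hrA
      rcases eq_or_lt_of_le hru with rfl | hru'
      · exact hrA.2
      · refine goodPt_append f a ε hrA.2 hru'.le ?_
        intro x y hx1 hx2 hy1 hy2
        have hx : x ∈ Ioo w u := ⟨(le_max_left w a).trans_lt (hr.trans_le hx1), hx2⟩
        have hy : y ∈ Ioo w u := ⟨(le_max_left w a).trans_lt (hr.trans_le hy1), hy2⟩
        calc dist (f x) (f y) ≤ dist (f x) l + dist l (f y) := dist_triangle _ _ _
          _ < ε / 2 + ε / 2 := by
              have := hsub hx; have h2 := hsub hy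
              rw [dist_comm l (f y)]
              exact add_lt_add this h2
          _ = ε := add_halves ε
  rcases eq_or_lt_of_le hub with heq | hub'
  · exact heq ▸ hPu
  · exfalso
    have hrc := hf.1 u ⟨hau, hub'⟩
    have hev : ∀ᶠ x in nhdsWithin u (Ioi u), dist (f x) (f u) < ε / 2 :=
      hrc (Metric.ball_mem_nhds (f u) (by positivity))
    obtain ⟨w, hw, hsub⟩ := mem_nhdsGT_iff_exists_Ioo_subset.mp hev
    set v := min b w with hv
    have huv : u < v := lt_min hub' hw
    have hvA : v ∈ A := by
      refine ⟨⟨hau.trans huv.le, min_le_left b w⟩, ?_⟩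
      refine goodPt_append f a ε hPu huv.le ?_
      intro x y hx1 hx2 hy1 hy2
      have key : ∀ z : ℝ, u ≤ z → z < v → dist (f z) (f u) < ε / 2 := by
        intro z hz1 hz2
        rcases eq_or_lt_of_le hz1 with rfl | hz1'
        · simp [hε, half_pos]
        · exact hsub ⟨hz1', hz2.trans_le (min_le_right b w)⟩
      calc dist (f x) (f y) ≤ dist (f x) (f u) + dist (f u) (f y) := dist_triangle _ _ _
        _ < ε / 2 + ε / 2 := by
            rw [dist_comm (f u) (f y)]
            exact add_lt_add (key x hx1 hx2) (key y hy1 hy2)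
        _ = ε := add_halves ε
    exact absurd (le_csSup hbdd hvA) (not_le.mpr huv)

end Key
/-- The truncated variation of a càdlàg function is finite. -/
theorem tvc_lt_top {E : Type*} [MetricSpace E] (a b : ℝ) (hab : a < b)
    (f : ℝ → E) (hf : Cadlag f a b) (c : ℝ) (hc : 0 < c) :
    TVc f c a b < ⊤ := by
  classical
  obtain ⟨n, s, hsmono, hs0, hsn, hosc⟩ := exists_good_partition f a c hab hf hc
  have hsnb : s n = b := hsn n le_rfl
  -- bound on distances to f a
  set M : ℝ := c + (Finset.range (n + 1)).sup' (by simp) (fun k => dist (f (s k)) (f a)) with hM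
  have hMbd : ∀ x ∈ Icc a b, dist (f x) (f a) ≤ M := by
    intro x hx
    rcases eq_or_lt_of_le hx.2 with heq | hxb
    · calc dist (f x) (f a) = dist (f (s n)) (f a) := by rw [hsnb, heq]
        _ ≤ (Finset.range (n + 1)).sup' (by simp) (fun k => dist (f (s k)) (f a)) :=
            Finset.le_sup' (fun k => dist (f (s k)) (f a)) (Finset.self_mem_range_succ n)
        _ ≤ M := by rw [hM]; linarith
    · set j := Nat.findGreatest (fun k => s k ≤ x) n with hj
      have hj1 : s j ≤ x :=
        Nat.findGreatest_spec (P := fun k => s k ≤ x) (Nat.zero_le n)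
          (show (fun k => s k ≤ x) 0 by simp only []; rw [hs0]; exact hx.1)
      have hjle : j ≤ n := Nat.findGreatest_le n
      have hjn : j < n := by
        rcases eq_or_lt_of_le hjle with heq | h
        · rw [heq] at hj1; rw [hsnb] at hj1; exact absurd hj1 (not_le.mpr hxb)
        · exact h
      have hj2 : x < s (j + 1) := by
        by_contra h
        exact Nat.findGreatest_is_greatest (Nat.lt_succ_self j) hjn (not_lt.mp h)
      have hd : dist (f x) (f (s j)) < c :=
        hosc j x (s j) hj1 hj2 le_rfl (hj1.trans_lt hj2)
      calc dist (f x) (f a) ≤ dist (f x) (f (s j)) + dist (f (s j)) (f a) :=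
            dist_triangle _ _ _
        _ ≤ c + (Finset.range (n + 1)).sup' (by simp) (fun k => dist (f (s k)) (f a)) := by
            refine add_le_add hd.le (Finset.le_sup' (fun k => dist (f (s k)) (f a)) ?_)
            simp [Nat.lt_succ_of_le hjle]
        _ = M := hM.symm
  set C : ENNReal := ENNReal.ofReal (2 * M) with hC
  have hbound : TVc f c a b ≤ (n : ENNReal) * C := by
    rw [TVc]
    refine iSup_le fun m => iSup_le fun t => iSup_le fun ht => ?_
    obtain ⟨ht0, htm, htlt⟩ := ht
    set u : ℕ → ℝ := fun i => t (min i m) with hudef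
    have hu : Monotone u := by
      apply monotone_nat_of_le_succ
      intro i
      rcases lt_or_ge i m with h | h
      · simp only [hudef, Nat.min_eq_left h.le, Nat.min_eq_left h]
        exact (htlt i h).le
      · simp only [hudef, Nat.min_eq_right h, Nat.min_eq_right (h.trans (Nat.le_succ i))]
        exact le_refl _
    have hua : ∀ i, a ≤ u i := fun i => by
      have h1 : u 0 ≤ u i := hu (Nat.zero_le i)
      have h0 : u 0 = t 0 := by simp [hudef]
      rw [h0] at h1
      exact ht0.trans h1
    have hub : ∀ i, u i ≤ b := fun i => by
      have h1 : u i ≤ u (max i m) := hu (le_max_left i m)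
      have h2 : u (max i m) = t m := by
        simp [hudef, Nat.min_eq_right (le_max_right i m)]
      rw [h2] at h1
      exact h1.trans htm
    set g : ℕ → ℕ := fun i => Nat.findGreatest (fun k => s k ≤ u i) n with hgdef
    have hg : Monotone g := fun i j hij =>
      Nat.findGreatest_mono (fun k hk => hk.trans (hu hij)) le_rfl
    have hterm : ∀ i < m,
        ENNReal.ofReal (dist (f (t (i + 1))) (f (t i)) - c) ≤ ((g (i + 1) - g i : ℕ) : ENNReal) * C := by
      intro i him
      have hui : u i = t i := by simp [hudef, Nat.min_eq_left him.le]
      have hui1 : u (i + 1) = t (i + 1) := by simp [hudef, Nat.min_eq_left him]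
      by_cases heq : g i = g (i + 1)
      · have hspec : ∀ j, s (g j) ≤ u j := fun j =>
          Nat.findGreatest_spec (P := fun k => s k ≤ u j) (Nat.zero_le n)
            (show (fun k => s k ≤ u j) 0 by simp only []; rw [hs0]; exact hua j)
        have hjn : g i < n := by
          rcases eq_or_lt_of_le (show g i ≤ n from Nat.findGreatest_le n) with he | h
          · exfalso
            have h1 : s (g i) ≤ u i := hspec i
            rw [he, hsnb] at h1
            have h2 : t i < t (i + 1) := htlt i him
            have h3 : u (i + 1) ≤ b := hub (i + 1)
            rw [hui] at h1; rw [hui1] at h3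
            linarith
          · exact h
        have hx2 : u (i + 1) < s (g i + 1) := by
          by_contra h
          have h2 : g (i + 1) < g i + 1 := by omega
          exact Nat.findGreatest_is_greatest (P := fun k => s k ≤ u (i + 1)) h2 hjn
            (not_lt.mp h)
        have hx1 : s (g i) ≤ u (i + 1) := heq ▸ hspec (i + 1)
        have hy1 : s (g i) ≤ u i := hspec i
        have hy2 : u i < s (g i + 1) := by
          rw [hui]
          calc t i < t (i + 1) := htlt i him
            _ = u (i + 1) := hui1.symm
            _ < s (g i + 1) := hx2
        have hd : dist (f (u (i + 1))) (f (u i)) < c :=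
          hosc (g i) (u (i + 1)) (u i) hx1 hx2 hy1 hy2
        rw [hui, hui1] at hd
        have : ENNReal.ofReal (dist (f (t (i + 1))) (f (t i)) - c) = 0 := by
          rw [ENNReal.ofReal_eq_zero]; linarith
        rw [this]; exact zero_le
      · have hgap : 1 ≤ g (i + 1) - g i := by
          have h1 : g i ≤ g (i + 1) := hg (Nat.le_succ i)
          omega
        have hdb : dist (f (t (i + 1))) (f (t i)) ≤ 2 * M := by
          have h1 := hMbd (t (i + 1)) ⟨hui1 ▸ hua (i + 1), hui1 ▸ hub (i + 1)⟩
          have h2 := hMbd (t i) ⟨hui ▸ hua i, hui ▸ hub i⟩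
          calc dist (f (t (i + 1))) (f (t i))
              ≤ dist (f (t (i + 1))) (f a) + dist (f a) (f (t i)) := dist_triangle _ _ _
            _ ≤ M + M := add_le_add h1 (by rw [dist_comm]; exact h2)
            _ = 2 * M := by ring
        calc ENNReal.ofReal (dist (f (t (i + 1))) (f (t i)) - c)
            ≤ ENNReal.ofReal (2 * M) := ENNReal.ofReal_le_ofReal (by linarith)
          _ = 1 * C := (one_mul C).symm
          _ ≤ ((g (i + 1) - g i : ℕ) : ENNReal) * C := by
              refine mul_le_mul_left ?_ C
              exact_mod_cast hgap
    calc ∑ i ∈ Finset.range m, ENNReal.ofReal (dist (f (t (i + 1))) (f (t i)) - c)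
        ≤ ∑ i ∈ Finset.range m, ((g (i + 1) - g i : ℕ) : ENNReal) * C :=
          Finset.sum_le_sum fun i hi => hterm i (Finset.mem_range.mp hi)
      _ = ((∑ i ∈ Finset.range m, (g (i + 1) - g i) : ℕ) : ENNReal) * C := by
          rw [Nat.cast_sum, Finset.sum_mul]
      _ = ((g m - g 0 : ℕ) : ENNReal) * C := by rw [Finset.sum_range_tsub hg]
      _ ≤ (n : ENNReal) * C := by
          refine mul_le_mul_left ?_ C
          exact_mod_cast le_trans (Nat.sub_le _ _) (Nat.findGreatest_le n)
  refine lt_of_le_of_lt hbound ?_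
  exact ENNReal.mul_lt_top (ENNReal.natCast_lt_top n) ENNReal.ofReal_lt_top
end

section
/- For a càdlàg function f : [a,b] → ℝ and c > 0, inf{ TV(f + h, [a,b]) : h : [a,b] → ℝ, ‖h‖_osc ≤ c } = TV^c(f,[a,b]), where ‖h‖_osc = sup_{s,u∈[a,b]} |h(s) − h(u)|. Moreover the infimum is attained. -/
open Set Filter

namespace TVAux

/-- generic truncated-variation-like functional -/
noncomputable def TVgen (W : ℝ → ℝ → ℝ) (α β : ℝ) : ENNReal :=
  ⨆ (n : ℕ) (t : ℕ → ℝ) (_ : IsPart α β n t),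
    ∑ i ∈ Finset.range n, ENNReal.ofReal (W (t i) (t (i + 1)))

def Wup (f : ℝ → ℝ) (c : ℝ) : ℝ → ℝ → ℝ := fun p q => f q - f p - c
def Wdn (f : ℝ → ℝ) (c : ℝ) : ℝ → ℝ → ℝ := fun p q => f p - f q - c
def Wtv (f : ℝ → ℝ) (c : ℝ) : ℝ → ℝ → ℝ := fun p q => dist (f q) (f p) - c

lemma UTVc_eq (f : ℝ → ℝ) (c a b : ℝ) : UTVc f c a b = TVgen (Wup f c) a b := rfl
lemma DTVc_eq (f : ℝ → ℝ) (c a b : ℝ) : DTVc f c a b = TVgen (Wdn f c) a b := rfl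
lemma TVc_eq (f : ℝ → ℝ) (c a b : ℝ) : TVc f c a b = TVgen (Wtv f c) a b := rfl
lemma TVar_eq (F : ℝ → ℝ) (a b : ℝ) :
    TVar F a b = TVgen (fun p q => dist (F q) (F p)) a b := rfl

lemma TVgen_congr {W W' : ℝ → ℝ → ℝ} (h : ∀ p q, W p q = W' p q) (α β : ℝ) :
    TVgen W α β = TVgen W' α β := by
  unfold TVgen; simp only [h]

lemma Wup_neg (f : ℝ → ℝ) (c : ℝ) : Wup (fun x => -f x) c = Wdn f c := by
  funext p q; simp [Wup, Wdn]; ring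

lemma Wdn_neg (f : ℝ → ℝ) (c : ℝ) : Wdn (fun x => -f x) c = Wup f c := by
  funext p q; simp [Wup, Wdn]; ring

lemma Wtv_neg (f : ℝ → ℝ) (c : ℝ) : Wtv (fun x => -f x) c = Wtv f c := by
  funext p q; simp [Wtv, dist_neg_neg]

namespace Part

variable {α β : ℝ} {n : ℕ} {t : ℕ → ℝ}

lemma mono (h : IsPart α β n t) {i j : ℕ} (hij : i ≤ j) (hj : j ≤ n) : t i ≤ t j := by
  obtain ⟨k, rfl⟩ := Nat.exists_eq_add_of_le hij
  clear hij
  induction k with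
  | zero => simp
  | succ m ih =>
    have h1 : t i ≤ t (i + m) := ih (by omega)
    have h2 : t (i + m) < t (i + m + 1) := h.2.2 (i + m) (by omega)
    calc t i ≤ t (i + m) := h1
      _ ≤ t (i + (m + 1)) := by rw [show i + (m+1) = i + m + 1 by ring]; exact h2.le

lemma mem (h : IsPart α β n t) {i : ℕ} (hi : i ≤ n) : α ≤ t i ∧ t i ≤ β :=
  ⟨le_trans h.1 (mono h (Nat.zero_le _) hi), le_trans (mono h hi le_rfl) h.2.1⟩

end Part

lemma sum_le_TVgen {W : ℝ → ℝ → ℝ} {α β : ℝ} {n : ℕ} {t : ℕ → ℝ} (h : IsPart α β n t) :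
    ∑ i ∈ Finset.range n, ENNReal.ofReal (W (t i) (t (i + 1))) ≤ TVgen W α β := by
  unfold TVgen
  exact le_iSup_of_le n (le_iSup_of_le t (le_iSup_of_le h le_rfl))

lemma TVgen_mono {W : ℝ → ℝ → ℝ} {α α' β β' : ℝ} (hα : α ≤ α') (hβ : β' ≤ β) :
    TVgen W α' β' ≤ TVgen W α β := by
  unfold TVgen
  refine iSup_le fun n => iSup_le fun t => iSup_le fun h => ?_
  exact sum_le_TVgen ⟨le_trans hα h.1, le_trans h.2.1 hβ, h.2.2⟩

/-- a single pair bound -/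
lemma TVgen_single {W : ℝ → ℝ → ℝ} {β p w : ℝ} (hpw : p < w) (hwβ : w ≤ β) :
    ENNReal.ofReal (W p w) ≤ TVgen W p β := by
  have hpart : IsPart p β 1 (fun i => if i = 0 then p else w) := by
    refine ⟨by simp, by simp [hwβ], ?_⟩
    intro i hi
    interval_cases i
    simpa using hpw
  have := sum_le_TVgen (W := W) hpart
  simpa using this

/-- key surgery : prepend a pair -/
lemma TVgen_concat {W : ℝ → ℝ → ℝ} {β p w : ℝ} (hpw : p < w) (hwβ : w ≤ β) :
    ENNReal.ofReal (W p w) + TVgen W w β ≤ TVgen W p β := by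
  have key : ∀ (n : ℕ) (t : ℕ → ℝ), IsPart w β n t →
      ENNReal.ofReal (W p w) + ∑ i ∈ Finset.range n, ENNReal.ofReal (W (t i) (t (i + 1)))
        ≤ TVgen W p β := by
    intro n t ht
    have h0 : p < t 0 := lt_of_lt_of_le hpw ht.1
    rcases eq_or_lt_of_le ht.1 with hw0 | hw0
    · -- w = t 0 : prepend just p
      set t' : ℕ → ℝ := fun i => if i = 0 then p else t (i - 1) with ht'
      have hpart : IsPart p β (n + 1) t' := by
        refine ⟨by simp [ht'], by simpa [ht'] using ht.2.1, ?_⟩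
        intro i hi
        rcases Nat.eq_zero_or_pos i with rfl | hipos
        · simpa [ht'] using h0
        · have h1 : ¬ (i = 0) := Nat.pos_iff_ne_zero.mp hipos
          have h2 : ¬ (i + 1 = 0) := by omega
          simp only [ht', if_neg h1, if_neg h2]
          have hlt : i - 1 < n := by omega
          have := ht.2.2 (i-1) hlt
          have heq : i - 1 + 1 = i := by omega
          rwa [heq] at this
      refine le_trans ?_ (sum_le_TVgen hpart)
      rw [Finset.sum_range_succ']
      have e0 : ENNReal.ofReal (W (t' 0) (t' (0+1))) = ENNReal.ofReal (W p w) := by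
        simp [ht', hw0]
      have e1 : ∑ i ∈ Finset.range n, ENNReal.ofReal (W (t' (i+1)) (t' (i+1+1)))
          = ∑ i ∈ Finset.range n, ENNReal.ofReal (W (t i) (t (i+1))) := by
        refine Finset.sum_congr rfl fun i _ => ?_
        simp [ht']
      rw [e1, e0, add_comm]
    · -- w < t 0 : prepend p and w
      set t' : ℕ → ℝ := fun i => if i = 0 then p else if i = 1 then w else t (i - 2) with ht'
      have hpart : IsPart p β (n + 2) t' := by
        refine ⟨by simp [ht'], by simpa [ht'] using ht.2.1, ?_⟩
        intro i hi
        match i with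
        | 0 => simpa [ht'] using hpw
        | 1 => simpa [ht'] using hw0
        | (k+2) =>
          simp only [ht', show ¬ (k+2 = 0) by omega, show ¬ (k+2 = 1) by omega,
            show ¬ (k+2+1 = 0) by omega, show ¬ (k+2+1 = 1) by omega, if_neg, if_false]
          norm_num
          have hlt : k < n := by omega
          have := ht.2.2 k hlt
          simpa using this
      refine le_trans ?_ (sum_le_TVgen hpart)
      rw [Finset.sum_range_succ', Finset.sum_range_succ']
      have e0 : ENNReal.ofReal (W (t' 0) (t' (0+1))) = ENNReal.ofReal (W p w) := by
        simp [ht']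
      have e1 : ∑ i ∈ Finset.range n, ENNReal.ofReal (W (t' (i+1+1)) (t' (i+1+1+1)))
          = ∑ i ∈ Finset.range n, ENNReal.ofReal (W (t i) (t (i+1))) := by
        refine Finset.sum_congr rfl fun i _ => ?_
        simp [ht']
      rw [e1, e0]
      calc ENNReal.ofReal (W p w) + ∑ i ∈ Finset.range n, ENNReal.ofReal (W (t i) (t (i + 1)))
          ≤ (∑ i ∈ Finset.range n, ENNReal.ofReal (W (t i) (t (i + 1)))
              + ENNReal.ofReal (W (t' (0+1)) (t' (0+1+1)))) + ENNReal.ofReal (W p w) := by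
            rw [add_comm]
            exact add_le_add (le_add_right le_rfl) le_rfl
        _ = _ := by ring
  rw [TVgen, ENNReal.add_iSup]
  refine iSup_le fun n => ?_
  rw [ENNReal.add_iSup]
  refine iSup_le fun t => ?_
  by_cases ht : IsPart w β n t
  · rw [iSup_pos ht]; exact key n t ht
  · rw [iSup_neg ht]
    simp only [bot_eq_zero, add_zero]
    exact TVgen_single hpw hwβ


section Families

/-- value of a list of pairs under weight W -/
noncomputable def FVal (W : ℝ → ℝ → ℝ) (l : List (ℝ × ℝ)) : ENNReal :=
  (l.map fun p => ENNReal.ofReal (W p.1 p.2)).sum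

/-- raw (signed) value -/
def FRaw (W : ℝ → ℝ → ℝ) (l : List (ℝ × ℝ)) : ℝ :=
  (l.map fun p => W p.1 p.2).sum

/-- a sorted family of (possibly degenerate) pairs in `[α, β]`; degenerate pairs must
have nonpositive weight -/
def Fam (W : ℝ → ℝ → ℝ) (α β : ℝ) (l : List (ℝ × ℝ)) : Prop :=
  l.Pairwise (fun p q => p.2 ≤ q.1) ∧
    ∀ p ∈ l, α ≤ p.1 ∧ p.1 ≤ p.2 ∧ p.2 ≤ β ∧ (p.1 < p.2 ∨ W p.1 p.2 ≤ 0)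

/-- strictly positive strict family -/
def FamP (W : ℝ → ℝ → ℝ) (α β : ℝ) (l : List (ℝ × ℝ)) : Prop :=
  l.Pairwise (fun p q => p.2 ≤ q.1) ∧
    ∀ p ∈ l, α ≤ p.1 ∧ p.1 < p.2 ∧ p.2 ≤ β ∧ 0 < W p.1 p.2

lemma FamP.toFam {W α β l} (h : FamP W α β l) : Fam W α β l :=
  ⟨h.1, fun p hp => ⟨(h.2 p hp).1, (h.2 p hp).2.1.le, (h.2 p hp).2.2.1, Or.inl (h.2 p hp).2.1⟩⟩

lemma FamP.toFamW {W W' : ℝ → ℝ → ℝ} {α β : ℝ} {l : List (ℝ × ℝ)} (h : FamP W α β l) :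
    Fam W' α β l :=
  ⟨h.1, fun p hp => ⟨(h.2 p hp).1, (h.2 p hp).2.1.le, (h.2 p hp).2.2.1, Or.inl (h.2 p hp).2.1⟩⟩

@[simp] lemma FVal_nil (W) : FVal W [] = 0 := rfl
@[simp] lemma FVal_cons (W) (p) (l) :
    FVal W (p :: l) = ENNReal.ofReal (W p.1 p.2) + FVal W l := by simp [FVal]
lemma FVal_append (W) (l₁ l₂ : List (ℝ × ℝ)) :
    FVal W (l₁ ++ l₂) = FVal W l₁ + FVal W l₂ := by simp [FVal]
@[simp] lemma FRaw_nil (W) : FRaw W [] = 0 := rfl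
@[simp] lemma FRaw_cons (W) (p) (l) : FRaw W (p :: l) = W p.1 p.2 + FRaw W l := by simp [FRaw]
lemma FRaw_append (W) (l₁ l₂ : List (ℝ × ℝ)) :
    FRaw W (l₁ ++ l₂) = FRaw W l₁ + FRaw W l₂ := by simp [FRaw]

lemma ofReal_FRaw_le (W) (l : List (ℝ × ℝ)) : ENNReal.ofReal (FRaw W l) ≤ FVal W l := by
  induction l with
  | nil => simp
  | cons p r ih =>
    rw [FRaw_cons, FVal_cons]
    exact le_trans (ENNReal.ofReal_add_le) (add_le_add le_rfl ih)

lemma FVal_eq_ofReal_FRaw {W : ℝ → ℝ → ℝ} {l : List (ℝ × ℝ)}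
    (h : ∀ p ∈ l, 0 ≤ W p.1 p.2) : FVal W l = ENNReal.ofReal (FRaw W l) := by
  induction l with
  | nil => simp
  | cons p r ih =>
    have h1 : 0 ≤ W p.1 p.2 := h p (by simp)
    have h2 : 0 ≤ FRaw W r := by
      have : ∀ x ∈ (r.map fun p => W p.1 p.2), 0 ≤ x := by
        intro x hx
        obtain ⟨q, hq, rfl⟩ := List.mem_map.mp hx
        exact h q (by simp [hq])
      exact List.sum_nonneg this
    rw [FRaw_cons, FVal_cons, ih (fun p hp => h p (by simp [hp])),
      ENNReal.ofReal_add h1 h2]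

lemma FVal_mono_W {W W' : ℝ → ℝ → ℝ} {l : List (ℝ × ℝ)}
    (h : ∀ p ∈ l, W p.1 p.2 ≤ W' p.1 p.2) : FVal W l ≤ FVal W' l := by
  induction l with
  | nil => simp
  | cons p r ih =>
    rw [FVal_cons, FVal_cons]
    exact add_le_add (ENNReal.ofReal_le_ofReal (h p (by simp)))
      (ih fun q hq => h q (by simp [hq]))

/-- endpoint after consuming a family -/
def endOf (α : ℝ) : List (ℝ × ℝ) → ℝ
  | [] => α
  | p :: r => endOf p.2 r

lemma fam_tail {W : ℝ → ℝ → ℝ} {β : ℝ} :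
    ∀ (l : List (ℝ × ℝ)) (α : ℝ), Fam W α β l → α ≤ β →
      FVal W l + TVgen W (endOf α l) β ≤ TVgen W α β := by
  intro l
  induction l with
  | nil => intro α _ _; simp [endOf]
  | cons p r ih =>
    intro α hf hαβ
    have hp := hf.2 p (by simp)
    have hfr : Fam W p.2 β r := by
      constructor
      · exact hf.1.sublist (List.sublist_cons_self p r) |>.imp (fun h => h) |>.imp id
      · intro q hq
        have h2 := hf.2 q (by simp [hq])
        have h3 : p.2 ≤ q.1 := by
          have := List.rel_of_pairwise_cons hf.1 hq
          exact this
        exact ⟨h3, h2.2.1, h2.2.2.1, h2.2.2.2⟩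
    rcases hp.2.2.2 with hlt | hw0
    · -- strict pair : use concat
      have step := TVgen_concat (W := W) hlt hp.2.2.1
      have ihr := ih p.2 hfr hp.2.2.1
      rw [FVal_cons, endOf]
      calc ENNReal.ofReal (W p.1 p.2) + FVal W r + TVgen W (endOf p.2 r) β
          = ENNReal.ofReal (W p.1 p.2) + (FVal W r + TVgen W (endOf p.2 r) β) := by ring
        _ ≤ ENNReal.ofReal (W p.1 p.2) + TVgen W p.2 β := add_le_add le_rfl ihr
        _ ≤ TVgen W p.1 β := step
        _ ≤ TVgen W α β := TVgen_mono hp.1 le_rfl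
    · -- degenerate pair : weight ≤ 0 contributes nothing
      have ihr := ih p.2 hfr hp.2.2.1
      rw [FVal_cons, endOf]
      have h0 : ENNReal.ofReal (W p.1 p.2) = 0 := by
        exact ENNReal.ofReal_eq_zero.mpr hw0
      rw [h0, zero_add]
      exact le_trans ihr (TVgen_mono (le_trans hp.1 hp.2.1) le_rfl)

lemma fam_le {W : ℝ → ℝ → ℝ} {α β : ℝ} {l : List (ℝ × ℝ)} (hf : Fam W α β l)
    (hαβ : α ≤ β) : FVal W l ≤ TVgen W α β :=
  le_trans (le_add_right le_rfl) (fam_tail l α hf hαβ)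

/-- prefix a partition -/
lemma TVgen_prefix {W : ℝ → ℝ → ℝ} {β : ℝ} :
    ∀ (n : ℕ) (q : ℕ → ℝ) (α s : ℝ), s ≤ β → IsPart α s n q →
      (∑ i ∈ Finset.range n, ENNReal.ofReal (W (q i) (q (i + 1)))) + TVgen W (q n) β
        ≤ TVgen W α β := by
  intro n
  induction n with
  | zero =>
    intro q α s hsβ hq
    simp only [Finset.range_zero, Finset.sum_empty, zero_add]
    exact TVgen_mono hq.1 le_rfl
  | succ m ih =>
    intro q α s hsβ hq
    have hq' : IsPart α (q m) m q := ⟨hq.1, le_rfl, fun i hi => hq.2.2 i (by omega)⟩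
    have hqmβ : q m ≤ β := le_trans ((hq.2.2 m (by omega)).le.trans hq.2.1) hsβ
    have step : ENNReal.ofReal (W (q m) (q (m+1))) + TVgen W (q (m+1)) β
        ≤ TVgen W (q m) β :=
      TVgen_concat (hq.2.2 m (by omega)) (le_trans hq.2.1 hsβ)
    calc (∑ i ∈ Finset.range (m+1), ENNReal.ofReal (W (q i) (q (i + 1)))) + TVgen W (q (m+1)) β
        = (∑ i ∈ Finset.range m, ENNReal.ofReal (W (q i) (q (i + 1))))
            + (ENNReal.ofReal (W (q m) (q (m+1))) + TVgen W (q (m+1)) β) := by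
          rw [Finset.sum_range_succ]; ring
      _ ≤ (∑ i ∈ Finset.range m, ENNReal.ofReal (W (q i) (q (i + 1)))) + TVgen W (q m) β :=
          add_le_add le_rfl step
      _ ≤ TVgen W α β := ih q α (q m) hqmβ hq'

end Families


section Extraction

open Classical in
/-- extract the positive pairs of a partition as a family -/
noncomputable def extr (W : ℝ → ℝ → ℝ) (t : ℕ → ℝ) (n : ℕ) : List (ℝ × ℝ) :=
  (List.range n).filterMap fun i =>
    if 0 < W (t i) (t (i + 1)) then some (t i, t (i + 1)) else none

open Classical in
lemma extr_fval (W : ℝ → ℝ → ℝ) (t : ℕ → ℝ) (n : ℕ) :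
    FVal W (extr W t n) = ∑ i ∈ Finset.range n, ENNReal.ofReal (W (t i) (t (i + 1))) := by
  induction n with
  | zero => simp [extr, FVal]
  | succ m ih =>
    rw [extr, List.range_succ, List.filterMap_append, FVal_append, Finset.sum_range_succ,
      ← extr, ih]
    congr 1
    by_cases h : 0 < W (t m) (t (m + 1))
    · simp [h, FVal]
    · simp only [List.filterMap, if_neg h]
      simp [FVal, ENNReal.ofReal_eq_zero.mpr (not_lt.mp h)]

open Classical in
lemma extr_famP {W : ℝ → ℝ → ℝ} {α β : ℝ} {t : ℕ → ℝ} {n : ℕ} (ht : IsPart α β n t) :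
    FamP W α β (extr W t n) := by
  have hmem : ∀ p ∈ extr W t n, ∃ i, i < n ∧ p = (t i, t (i + 1)) ∧ 0 < W (t i) (t (i + 1)) := by
    intro p hp
    obtain ⟨i, hi, hip⟩ := List.mem_filterMap.mp hp
    have hin : i < n := List.mem_range.mp hi
    by_cases h : 0 < W (t i) (t (i + 1))
    · rw [if_pos h] at hip
      exact ⟨i, hin, (Option.some_inj.mp hip).symm, h⟩
    · rw [if_neg h] at hip
      exact absurd hip (by simp)
  constructor
  · rw [extr, List.pairwise_filterMap]
    refine (List.pairwise_lt_range (n := n)).imp_of_mem ?_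
    intro i j hi hj hij p hp q hq
    by_cases h1 : 0 < W (t i) (t (i + 1))
    · by_cases h2 : 0 < W (t j) (t (j + 1))
      · rw [if_pos h1] at hp; rw [if_pos h2] at hq
        have hjn : j < n := List.mem_range.mp hj
        rw [Option.some_inj] at hp hq
        rw [← hp, ← hq]
        exact Part.mono ht (by omega : i + 1 ≤ j) hjn.le
      · rw [if_neg h2] at hq; exact absurd hq (by simp)
    · rw [if_neg h1] at hp; exact absurd hp (by simp)
  · intro p hp
    obtain ⟨i, hin, rfl, hpos⟩ := hmem p hp
    exact ⟨(Part.mem ht hin.le).1, ht.2.2 i hin, (Part.mem ht hin).2, hpos⟩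

end Extraction


section Misc

lemma TVgen_mono_W {W W' : ℝ → ℝ → ℝ} (h : ∀ p q, W p q ≤ W' p q) (α β : ℝ) :
    TVgen W α β ≤ TVgen W' α β := by
  unfold TVgen
  refine iSup_le fun n => iSup_le fun t => iSup_le fun ht => ?_
  refine le_trans ?_ (sum_le_TVgen (W := W') ht)
  exact Finset.sum_le_sum fun i _ => ENNReal.ofReal_le_ofReal (h _ _)

lemma UTVc_le_TVc (f : ℝ → ℝ) (c a b : ℝ) : UTVc f c a b ≤ TVc f c a b := by
  rw [UTVc_eq, TVc_eq]
  refine TVgen_mono_W (fun p q => ?_) a b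
  simp only [Wup, Wtv, Real.dist_eq]
  have := le_abs_self (f q - f p)
  linarith

lemma DTVc_le_TVc (f : ℝ → ℝ) (c a b : ℝ) : DTVc f c a b ≤ TVc f c a b := by
  rw [DTVc_eq, TVc_eq]
  refine TVgen_mono_W (fun p q => ?_) a b
  simp only [Wdn, Wtv, Real.dist_eq]
  have := neg_abs_le (f q - f p)
  linarith

lemma exists_part_near {W : ℝ → ℝ → ℝ} {α β : ℝ} (hαβ : α ≤ β)
    (htop : TVgen W α β ≠ ⊤) {ε : ENNReal} (hε : ε ≠ 0) :
    ∃ (n : ℕ) (t : ℕ → ℝ) (_ : IsPart α β n t),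
      TVgen W α β ≤ (∑ i ∈ Finset.range n, ENNReal.ofReal (W (t i) (t (i + 1)))) + ε := by
  rcases le_or_gt (TVgen W α β) ε with hle | hlt
  · exact ⟨0, fun _ => α, ⟨le_rfl, hαβ, by omega⟩, by simpa using hle⟩
  · have h0 : TVgen W α β ≠ 0 := by
      intro h; rw [h] at hlt; exact absurd hlt (by simp)
    have hsub : TVgen W α β - ε < TVgen W α β :=
      ENNReal.sub_lt_self htop h0 hε
    rw [TVgen] at hsub
    rw [lt_iSup_iff] at hsub
    obtain ⟨n, hn⟩ := hsub
    rw [lt_iSup_iff] at hn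
    obtain ⟨t, htt⟩ := hn
    rw [lt_iSup_iff] at htt
    obtain ⟨ht, hlt'⟩ := htt
    exact ⟨n, t, ht, tsub_le_iff_right.mp hlt'.le⟩

end Misc

section Part2

lemma part2 {a b c : ℝ} (hc : 0 ≤ c) (f h : ℝ → ℝ)
    (hosc : ∀ s ∈ Set.Icc a b, ∀ u ∈ Set.Icc a b, |h s - h u| ≤ c) :
    TVc f c a b ≤ TVar (fun t => f t + h t) a b := by
  rw [TVc_eq, TVar_eq]
  unfold TVgen
  refine iSup_le fun n => iSup_le fun t => iSup_le fun ht => ?_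
  refine le_trans ?_ (sum_le_TVgen (W := fun p q => dist (f q + h q) (f p + h p)) ht)
  refine Finset.sum_le_sum fun i hi => ENNReal.ofReal_le_ofReal ?_
  have hin : i < n := Finset.mem_range.mp hi
  have hmem1 := Part.mem ht (le_of_lt hin)
  have hmem2 := Part.mem ht (by omega : i + 1 ≤ n)
  have hh : |h (t (i+1)) - h (t i)| ≤ c :=
    hosc _ ⟨hmem2.1, hmem2.2⟩ _ ⟨hmem1.1, hmem1.2⟩
  simp only [Wtv, Real.dist_eq]
  have htri : |f (t (i+1)) - f (t i)| ≤
      |(f (t (i+1)) + h (t (i+1))) - (f (t i) + h (t i))| + |h (t (i+1)) - h (t i)| := by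
    have : f (t (i+1)) - f (t i) =
        ((f (t (i+1)) + h (t (i+1))) - (f (t i) + h (t i))) - (h (t (i+1)) - h (t i)) := by ring
    rw [this]
    exact abs_sub _ _
  linarith

end Part2


section MkGaps

variable {f : ℝ → ℝ} {c : ℝ}

/-- complementary "gap" pairs: `(σ, x₁), (y₁, x₂), …, (y_m, T)` -/
def mkGaps (T : ℝ) : ℝ → List (ℝ × ℝ) → List (ℝ × ℝ)
  | σ, [] => [(σ, T)]
  | σ, p :: r => (σ, p.1) :: mkGaps T p.2 r

lemma mkGaps_raw (f : ℝ → ℝ) (c T : ℝ) :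
    ∀ (l : List (ℝ × ℝ)) (σ : ℝ),
      FRaw (Wup f c) (mkGaps T σ l) = (f T - f σ - c) + FRaw (Wdn f c) l := by
  intro l
  induction l with
  | nil => intro σ; simp [mkGaps, FRaw, Wup]
  | cons p r ih =>
    intro σ
    rw [show mkGaps T σ (p :: r) = (σ, p.1) :: mkGaps T p.2 r from rfl,
      FRaw_cons, ih p.2, FRaw_cons]
    simp only [Wup, Wdn]
    ring

lemma mkGaps_mem {T : ℝ} :
    ∀ (l : List (ℝ × ℝ)) (σ : ℝ), σ ≤ T →
      (∀ p ∈ l, σ ≤ p.1 ∧ p.1 ≤ p.2 ∧ p.2 ≤ T) →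
      l.Pairwise (fun p q => p.2 ≤ q.1) →
      ∀ g ∈ mkGaps T σ l, σ ≤ g.1 ∧ g.1 ≤ g.2 ∧ g.2 ≤ T := by
  intro l
  induction l with
  | nil =>
    intro σ hσT _ _ g hg
    simp only [mkGaps, List.mem_singleton] at hg
    subst hg
    exact ⟨le_rfl, hσT, le_rfl⟩
  | cons p r ih =>
    intro σ hσT hmem hpw g hg
    have hp := hmem p (by simp)
    rw [show mkGaps T σ (p :: r) = (σ, p.1) :: mkGaps T p.2 r from rfl] at hg
    rcases List.mem_cons.mp hg with rfl | hg'
    · exact ⟨le_rfl, hp.1, hp.2.1.trans hp.2.2⟩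
    · have hrec := ih p.2 (hp.2.2)
        (fun q hq => ⟨List.rel_of_pairwise_cons hpw hq, (hmem q (by simp [hq])).2⟩)
        (hpw.sublist (List.sublist_cons_self p r)) g hg'
      exact ⟨le_trans (hp.1.trans hp.2.1) hrec.1, hrec.2⟩

lemma mkGaps_fam (hc : 0 ≤ c) {T : ℝ} :
    ∀ (l : List (ℝ × ℝ)) (σ : ℝ), σ ≤ T →
      (∀ p ∈ l, σ ≤ p.1 ∧ p.1 ≤ p.2 ∧ p.2 ≤ T) →
      l.Pairwise (fun p q => p.2 ≤ q.1) →
      Fam (Wup f c) σ T (mkGaps T σ l) := by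
  intro l
  induction l with
  | nil =>
    intro σ hσT _ _
    constructor
    · simp [mkGaps]
    · intro g hg
      simp only [mkGaps, List.mem_singleton] at hg
      subst hg
      refine ⟨le_rfl, hσT, le_rfl, ?_⟩
      rcases lt_or_ge σ T with h | h
      · exact Or.inl h
      · refine Or.inr ?_
        have hEq : σ = T := le_antisymm hσT h
        simp only [Wup, hEq]
        linarith
  | cons p r ih =>
    intro σ hσT hmem hpw
    have hp := hmem p (by simp)
    have hpw' : r.Pairwise (fun p q => p.2 ≤ q.1) := hpw.sublist (List.sublist_cons_self p r)
    have hmem' : ∀ q ∈ r, p.2 ≤ q.1 ∧ q.1 ≤ q.2 ∧ q.2 ≤ T :=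
      fun q hq => ⟨List.rel_of_pairwise_cons hpw hq, (hmem q (by simp [hq])).2⟩
    have hrec := ih p.2 hp.2.2 hmem' hpw'
    rw [show mkGaps T σ (p :: r) = (σ, p.1) :: mkGaps T p.2 r from rfl]
    constructor
    · rw [List.pairwise_cons]
      refine ⟨?_, hrec.1⟩
      intro g hg
      have := mkGaps_mem r p.2 hp.2.2 (fun q hq => (hmem' q hq)) hpw' g hg
      exact le_trans hp.2.1 this.1
    · intro g hg
      rcases List.mem_cons.mp hg with rfl | hg'
      · refine ⟨le_rfl, hp.1, hp.2.1.trans hp.2.2, ?_⟩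
        rcases lt_or_ge σ p.1 with h | h
        · exact Or.inl h
        · refine Or.inr ?_
          have hEq : σ = p.1 := le_antisymm hp.1 h
          simp only [Wup, hEq]
          linarith
      · have h2 := hrec.2 g hg'
        have h3 := le_trans hp.2.1 h2.1
        exact ⟨le_trans (hp.1.trans hp.2.1) h2.1, h2.2⟩

end MkGaps


section ClaimA

lemma le_toReal_ofReal (x : ℝ) : x ≤ (ENNReal.ofReal x).toReal := by
  rcases le_or_gt 0 x with h | h
  · rw [ENNReal.toReal_ofReal h]
  · rw [ENNReal.ofReal_eq_zero.mpr h.le]; simpa using h.le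

lemma FamP.fraw_nonneg {W : ℝ → ℝ → ℝ} {α β : ℝ} {l : List (ℝ × ℝ)} (h : FamP W α β l) :
    0 ≤ FRaw W l := by
  refine List.sum_nonneg ?_
  intro x hx
  obtain ⟨p, hp, rfl⟩ := List.mem_map.mp hx
  exact (h.2 p hp).2.2.2.le

lemma FamP.fval_eq {W : ℝ → ℝ → ℝ} {α β : ℝ} {l : List (ℝ × ℝ)} (h : FamP W α β l) :
    FVal W l = ENNReal.ofReal (FRaw W l) :=
  FVal_eq_ofReal_FRaw (fun p hp => (h.2 p hp).2.2.2.le)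

lemma Fam.mono_left {W : ℝ → ℝ → ℝ} {α α' β : ℝ} {l : List (ℝ × ℝ)}
    (h : Fam W α β l) (hα : α' ≤ α) : Fam W α' β l :=
  ⟨h.1, fun p hp => ⟨le_trans hα (h.2 p hp).1, (h.2 p hp).2⟩⟩

/-- the "up-chain": a partition of `[a,s]` together with the gaps of a down-family
in `[σ,t]` bound `UTVc` on `[a,t]` from below. -/
lemma upchain (f : ℝ → ℝ) {c : ℝ} (hc : 0 ≤ c) {a s t : ℝ}
    (hUt : UTVc f c a t ≠ ⊤) {np : ℕ} {p : ℕ → ℝ} (hp : IsPart a s np p) (hst : s ≤ t)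
    {σ : ℝ} (hsσ : s ≤ σ) (hσt : σ ≤ t) {Rr : List (ℝ × ℝ)}
    (hmem : ∀ x ∈ Rr, σ ≤ x.1 ∧ x.1 ≤ x.2 ∧ x.2 ≤ t)
    (hpw : Rr.Pairwise (fun p q => p.2 ≤ q.1)) :
    (∑ i ∈ Finset.range np, ENNReal.ofReal (Wup f c (p i) (p (i + 1)))).toReal
      + ((f t - f σ - c) + FRaw (Wdn f c) Rr) ≤ (UTVc f c a t).toReal := by
  set Sp := ∑ i ∈ Finset.range np, ENNReal.ofReal (Wup f c (p i) (p (i + 1))) with hSp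
  have hSpfin : Sp ≠ ⊤ := by
    refine ne_top_of_le_ne_top hUt ?_
    rw [UTVc_eq]
    exact sum_le_TVgen ⟨hp.1, le_trans hp.2.1 hst, hp.2.2⟩
  set G := mkGaps t σ Rr with hG
  have hGfam : Fam (Wup f c) σ t G := mkGaps_fam hc Rr σ hσt hmem hpw
  have hGfam' : Fam (Wup f c) (p np) t G :=
    hGfam.mono_left (le_trans hp.2.1 hsσ)
  have hchain : Sp + ENNReal.ofReal (FRaw (Wup f c) G) ≤ UTVc f c a t := by
    rw [UTVc_eq]
    have h1 := TVgen_prefix (W := Wup f c) (β := t) np p a s hst hp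
    have h2 : FVal (Wup f c) G ≤ TVgen (Wup f c) (p np) t :=
      fam_le hGfam' (le_trans hp.2.1 hst)
    calc Sp + ENNReal.ofReal (FRaw (Wup f c) G)
        ≤ Sp + FVal (Wup f c) G := add_le_add le_rfl (ofReal_FRaw_le _ _)
      _ ≤ Sp + TVgen (Wup f c) (p np) t := add_le_add le_rfl h2
      _ ≤ TVgen (Wup f c) a t := h1
  have h4 := ENNReal.toReal_mono hUt hchain
  rw [ENNReal.toReal_add hSpfin ENNReal.ofReal_ne_top] at h4
  have h5 : FRaw (Wup f c) G ≤ (ENNReal.ofReal (FRaw (Wup f c) G)).toReal :=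
    le_toReal_ofReal _
  have h6 : FRaw (Wup f c) G = (f t - f σ - c) + FRaw (Wdn f c) Rr := mkGaps_raw f c t Rr σ
  linarith

lemma claimA (f : ℝ → ℝ) {c : ℝ} (hc : 0 ≤ c) {a b : ℝ}
    (hU : UTVc f c a b ≠ ⊤) (hD : DTVc f c a b ≠ ⊤)
    {s t : ℝ} (has : a ≤ s) (hst : s ≤ t) (htb : t ≤ b) :
    (UTVc f c a s).toReal + ((DTVc f c a t).toReal - (DTVc f c a s).toReal) + (f t - f s) - c
      ≤ (UTVc f c a t).toReal := by
  have hat : a ≤ t := le_trans has hst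
  have hstb : s ≤ b := le_trans hst htb
  have hUx : ∀ x, x ≤ b → a ≤ x → UTVc f c a x ≠ ⊤ := by
    intro x hx hax
    refine ne_top_of_le_ne_top hU ?_
    rw [UTVc_eq, UTVc_eq]
    exact TVgen_mono le_rfl hx
  have hDx : ∀ x, x ≤ b → a ≤ x → DTVc f c a x ≠ ⊤ := by
    intro x hx hax
    refine ne_top_of_le_ne_top hD ?_
    rw [DTVc_eq, DTVc_eq]
    exact TVgen_mono le_rfl hx
  refine le_of_forall_pos_le_add (fun ε hε => ?_)
  have hε2 : 0 < ε / 2 := by linarith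
  have hεE : (ENNReal.ofReal (ε / 2)) ≠ 0 := by
    simp only [ne_eq, ENNReal.ofReal_eq_zero, not_le]
    exact hε2
  -- down partition of [a,t]
  obtain ⟨nq, q, hq, hqle⟩ := exists_part_near (W := Wdn f c) hat
    (by rw [← DTVc_eq]; exact hDx t htb hat) hεE
  set F := extr (Wdn f c) q nq with hFdef
  have hFP : FamP (Wdn f c) a t F := extr_famP hq
  have hFv : FVal (Wdn f c) F
      = ∑ i ∈ Finset.range nq, ENNReal.ofReal (Wdn f c (q i) (q (i + 1))) :=
    extr_fval _ _ _
  have hsum_le : FVal (Wdn f c) F ≤ DTVc f c a t := by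
    rw [hFv, DTVc_eq]; exact sum_le_TVgen hq
  have hFfin : FVal (Wdn f c) F ≠ ⊤ := ne_top_of_le_ne_top (hDx t htb hat) hsum_le
  have hdt : (DTVc f c a t).toReal ≤ FRaw (Wdn f c) F + ε / 2 := by
    have h1 : DTVc f c a t ≤ FVal (Wdn f c) F + ENNReal.ofReal (ε / 2) := by
      rw [hFv, DTVc_eq]; exact hqle
    have h2 := ENNReal.toReal_mono
      (by exact ENNReal.add_ne_top.mpr ⟨hFfin, ENNReal.ofReal_ne_top⟩) h1
    rwa [ENNReal.toReal_add hFfin ENNReal.ofReal_ne_top, ENNReal.toReal_ofReal hε2.le,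
      hFP.fval_eq, ENNReal.toReal_ofReal hFP.fraw_nonneg] at h2
  -- up partition of [a,s]
  obtain ⟨np, p, hp, hple⟩ := exists_part_near (W := Wup f c) has
    (by rw [← UTVc_eq]; exact hUx s hstb has) hεE
  set Sp := ∑ i ∈ Finset.range np, ENNReal.ofReal (Wup f c (p i) (p (i + 1))) with hSp
  have hSple : Sp ≤ UTVc f c a s := by rw [UTVc_eq]; exact sum_le_TVgen hp
  have hSpfin : Sp ≠ ⊤ := ne_top_of_le_ne_top (hUx s hstb has) hSple
  have hus : (UTVc f c a s).toReal ≤ Sp.toReal + ε / 2 := by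
    have h1 : UTVc f c a s ≤ Sp + ENNReal.ofReal (ε / 2) := by
      rw [UTVc_eq]; exact hple
    have h2 := ENNReal.toReal_mono
      (ENNReal.add_ne_top.mpr ⟨hSpfin, ENNReal.ofReal_ne_top⟩) h1
    rwa [ENNReal.toReal_add hSpfin ENNReal.ofReal_ne_top,
      ENNReal.toReal_ofReal hε2.le] at h2
  -- split F at s
  obtain ⟨L, R', hsplit, hmemL, hheadfact⟩ :
      ∃ L R', L ++ R' = F ∧ (∀ x ∈ L, x.2 ≤ s) ∧ (∀ x R₂, R' = x :: R₂ → s < x.2) := by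
    classical
    set pred : ℝ × ℝ → Bool := fun x => decide (x.2 ≤ s) with hpred
    have hhead : ∀ (l : List (ℝ × ℝ)) x R₂, l.dropWhile pred = x :: R₂ → s < x.2 := by
      intro l
      induction l with
      | nil => intro x R₂ h; simp [List.dropWhile] at h
      | cons y ys ih =>
        intro x R₂ h
        by_cases hy : pred y
        · rw [List.dropWhile_cons_of_pos hy] at h; exact ih x R₂ h
        · rw [List.dropWhile_cons_of_neg hy] at h
          obtain ⟨rfl, rfl⟩ : y = x ∧ ys = R₂ := by
            injection h with h1 h2; exact ⟨h1, h2⟩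
          simp only [hpred, decide_eq_true_eq] at hy
          exact lt_of_not_ge hy
    refine ⟨F.takeWhile pred, F.dropWhile pred, List.takeWhile_append_dropWhile (p := pred) (l := F),
      ?_, hhead F⟩
    intro x hx
    have := List.mem_takeWhile_imp hx
    simpa [hpred] using this
  have hpwLR : (L ++ R').Pairwise (fun p q => p.2 ≤ q.1) := by rw [hsplit]; exact hFP.1
  obtain ⟨hpwL, hpwR, hcross⟩ := List.pairwise_append.mp hpwLR
  have hLmemF : ∀ x ∈ L, x ∈ F := fun x hx => hsplit ▸ List.mem_append_left R' hx
  have hFamL : Fam (Wdn f c) a s L := by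
    refine ⟨hpwL, fun x hx => ?_⟩
    have h1 := hFP.2 x (hLmemF x hx)
    exact ⟨h1.1, h1.2.1.le, hmemL x hx, Or.inl h1.2.1⟩
  have hLpos : ∀ x ∈ L, 0 ≤ Wdn f c x.1 x.2 :=
    fun x hx => (hFP.2 x (hLmemF x hx)).2.2.2.le
  have hLval : ENNReal.ofReal (FRaw (Wdn f c) L) ≤ DTVc f c a s := by
    rw [← FVal_eq_ofReal_FRaw hLpos, DTVc_eq]
    exact fam_le hFamL has
  have hLreal : FRaw (Wdn f c) L ≤ (DTVc f c a s).toReal := by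
    have := ENNReal.toReal_mono (hDx s hstb has) hLval
    rwa [ENNReal.toReal_ofReal (by
      refine List.sum_nonneg ?_
      intro x hx
      obtain ⟨pp, hpp, rfl⟩ := List.mem_map.mp hx
      exact hLpos pp hpp)] at this
  have hFrawsplit : FRaw (Wdn f c) F = FRaw (Wdn f c) L + FRaw (Wdn f c) R' := by
    rw [← hsplit, FRaw_append]
  -- case analysis on R'
  rcases R' with _ | ⟨p₀, R⟩
  · -- no pairs after s
    have hup := upchain f hc (hUx t htb hat) hp hst (le_refl s) hst
      (Rr := []) (by simp) (by simp)
    simp only [FRaw_nil, add_zero] at hFrawsplit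
    simp only [FRaw_nil, add_zero] at hup
    linarith
  · -- R' = p₀ :: R
    have hp₀F : p₀ ∈ F := by rw [← hsplit]; simp
    have hp₀b := hFP.2 p₀ hp₀F
    have hp₀s : s < p₀.2 := hheadfact p₀ R rfl
    have hpwR2 : R.Pairwise (fun p q => p.2 ≤ q.1) :=
      hpwR.sublist (List.sublist_cons_self p₀ R)
    have hmemRtail : ∀ x ∈ R, p₀.2 ≤ x.1 := fun x hx => List.rel_of_pairwise_cons hpwR hx
    have hmemRF : ∀ x ∈ R, x ∈ F := by
      intro x hx
      rw [← hsplit]; simp [hx]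
    have hRbounds : ∀ x ∈ R, p₀.2 ≤ x.1 ∧ x.1 ≤ x.2 ∧ x.2 ≤ t := by
      intro x hx
      have h1 := hFP.2 x (hmemRF x hx)
      exact ⟨hmemRtail x hx, h1.2.1.le, h1.2.2.1⟩
    have hstrad : Wdn f c p₀.1 p₀.2 = Wdn f c p₀.1 s + (f s - f p₀.2) := by
      simp only [Wdn]; ring
    have hR'raw : FRaw (Wdn f c) (p₀ :: R) = Wdn f c p₀.1 p₀.2 + FRaw (Wdn f c) R := by
      rw [FRaw_cons]
    by_cases hstrad_case : p₀.1 < s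
    · -- straddle
      have hcrossL : ∀ x ∈ L, x.2 ≤ p₀.1 := by
        intro x hx
        exact hcross x hx p₀ (by simp)
      have hFamL2 : Fam (Wdn f c) a s (L ++ [(p₀.1, s)]) := by
        refine ⟨?_, ?_⟩
        · rw [List.pairwise_append]
          exact ⟨hpwL, by simp, fun x hx y hy => by
            simp only [List.mem_singleton] at hy
            subst hy
            exact hcrossL x hx⟩
        · intro x hx
          rcases List.mem_append.mp hx with h | h
          · exact (hFamL.2 x h)
          · simp only [List.mem_singleton] at h
            subst h
            exact ⟨hp₀b.1, hstrad_case.le, le_rfl, Or.inl hstrad_case⟩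
      have hL2val : FVal (Wdn f c) (L ++ [(p₀.1, s)]) ≤ DTVc f c a s := by
        rw [DTVc_eq]; exact fam_le hFamL2 has
      have hL2split : FVal (Wdn f c) (L ++ [(p₀.1, s)])
          = ENNReal.ofReal (FRaw (Wdn f c) L) + ENNReal.ofReal (Wdn f c p₀.1 s) := by
        rw [FVal_append, FVal_eq_ofReal_FRaw hLpos]
        simp [FVal]
      have hL2fin : FVal (Wdn f c) (L ++ [(p₀.1, s)]) ≠ ⊤ :=
        ne_top_of_le_ne_top (hDx s hstb has) hL2val
      have hdsbound : FRaw (Wdn f c) L + Wdn f c p₀.1 s ≤ (DTVc f c a s).toReal := by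
        have h2 := ENNReal.toReal_mono (hDx s hstb has) hL2val
        rw [hL2split, ENNReal.toReal_add ENNReal.ofReal_ne_top ENNReal.ofReal_ne_top,
          ENNReal.toReal_ofReal (by
            refine List.sum_nonneg ?_
            intro x hx
            obtain ⟨pp, hpp, rfl⟩ := List.mem_map.mp hx
            exact hLpos pp hpp)] at h2
        have := le_toReal_ofReal (Wdn f c p₀.1 s)
        linarith
      -- choose σ
      rcases le_or_gt (f p₀.2) (f s) with hσcase | hσcase
      · -- σ = p₀.2 ; bonus = f s - f p₀.2 ≥ 0
        have hup := upchain f hc (hUx t htb hat) hp hst (σ := p₀.2) hp₀s.le hp₀b.2.2.1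
          (Rr := R) hRbounds hpwR2
        simp only [Wdn] at hdsbound hstrad hR'raw ⊢
        linarith
      · -- σ = s ; bonus = 0
        have hRbounds' : ∀ x ∈ R, s ≤ x.1 ∧ x.1 ≤ x.2 ∧ x.2 ≤ t := by
          intro x hx
          have h1 := hRbounds x hx
          exact ⟨le_trans hp₀s.le h1.1, h1.2⟩
        have hup := upchain f hc (hUx t htb hat) hp hst (σ := s) le_rfl hst
          (Rr := R) hRbounds' hpwR2
        simp only [Wdn] at hdsbound hstrad hR'raw hFrawsplit hdt ⊢
        linarith
    · -- no straddle : all of R' lives in [s, t]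
      have hR'bounds : ∀ x ∈ (p₀ :: R), s ≤ x.1 ∧ x.1 ≤ x.2 ∧ x.2 ≤ t := by
        intro x hx
        have hxF : x ∈ F := by rw [← hsplit]; simp [hx]
        have h1 := hFP.2 x hxF
        rcases List.mem_cons.mp hx with rfl | hx'
        · exact ⟨not_lt.mp hstrad_case, h1.2.1.le, h1.2.2.1⟩
        · exact ⟨le_trans (le_trans (not_lt.mp hstrad_case) hp₀b.2.1.le)
            (hmemRtail x hx'), h1.2.1.le, h1.2.2.1⟩
      have hup := upchain f hc (hUx t htb hat) hp hst (σ := s) le_rfl hst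
        (Rr := (p₀ :: R)) hR'bounds hpwR
      linarith

end ClaimA


section Uncross

lemma dropWhile_head_false {γ : Type*} (p : γ → Bool) :
    ∀ (l : List γ) (x : γ) (R₂ : List γ), l.dropWhile p = x :: R₂ → p x = false := by
  intro l
  induction l with
  | nil => intro x R₂ h; simp [List.dropWhile] at h
  | cons y ys ih =>
    intro x R₂ h
    by_cases hy : p y
    · rw [List.dropWhile_cons_of_pos hy] at h; exact ih x R₂ h
    · rw [List.dropWhile_cons_of_neg hy] at h
      injection h with h1 h2
      subst h1
      simpa using hy

lemma FRaw_nonneg_of {W : ℝ → ℝ → ℝ} {l : List (ℝ × ℝ)} (h : ∀ x ∈ l, 0 ≤ W x.1 x.2) :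
    0 ≤ FRaw W l := by
  refine List.sum_nonneg ?_
  intro x hx
  obtain ⟨p, hp, rfl⟩ := List.mem_map.mp hx
  exact h p hp

lemma mkGaps_endOf {T : ℝ} : ∀ (l : List (ℝ × ℝ)) (σ σ' : ℝ), endOf σ' (mkGaps T σ l) = T := by
  intro l
  induction l with
  | nil => intro σ σ'; simp [mkGaps, endOf]
  | cons p r ih =>
    intro σ σ'
    rw [show mkGaps T σ (p :: r) = (σ, p.1) :: mkGaps T p.2 r from rfl]
    show endOf (σ, p.1).2 (mkGaps T p.2 r) = T
    exact ih p.2 (σ, p.1).2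

lemma FamP.sublist {W : ℝ → ℝ → ℝ} {α β : ℝ} {l l' : List (ℝ × ℝ)}
    (h : FamP W α β l) (hsub : l'.Sublist l) : FamP W α β l' :=
  ⟨h.1.sublist hsub, fun p hp => h.2 p (hsub.subset hp)⟩

lemma Fam.relax {W W' : ℝ → ℝ → ℝ} {α β β' : ℝ} {l : List (ℝ × ℝ)}
    (h : Fam W α β l) (hβ : β ≤ β') (hW' : ∀ x : ℝ, W' x x ≤ 0) : Fam W' α β' l := by
  refine ⟨h.1, fun p hp => ?_⟩
  obtain ⟨h1, h2, h3, _⟩ := h.2 p hp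
  refine ⟨h1, h2, h3.trans hβ, ?_⟩
  rcases lt_or_eq_of_le h2 with h4 | h4
  · exact Or.inl h4
  · exact Or.inr (by rw [← h4]; exact hW' p.1)

lemma Wtv_self_nonpos {f : ℝ → ℝ} {c : ℝ} (hc : 0 ≤ c) (x : ℝ) : Wtv f c x x ≤ 0 := by
  simp [Wtv, dist_self]; linarith

lemma Wdn_le_Wtv (f : ℝ → ℝ) (c : ℝ) (p q : ℝ) : Wdn f c p q ≤ Wtv f c p q := by
  simp only [Wdn, Wtv, Real.dist_eq]
  have := neg_abs_le (f q - f p)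
  linarith

lemma Wup_le_Wtv (f : ℝ → ℝ) (c : ℝ) (p q : ℝ) : Wup f c p q ≤ Wtv f c p q := by
  simp only [Wup, Wtv, Real.dist_eq]
  have := le_abs_self (f q - f p)
  linarith

lemma resolve (f : ℝ → ℝ) {c : ℝ} (hc : 0 ≤ c) {α β : ℝ} (hαβ : α ≤ β)
    (a₀ : ℝ × ℝ) (A' B : List (ℝ × ℝ)) (N : ℕ)
    (hA : FamP (Wup f c) α β (a₀ :: A')) (hB : FamP (Wdn f c) α β B)
    (hfirst : ∀ x ∈ B, a₀.1 ≤ x.1)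
    (hlen : (a₀ :: A').length + B.length ≤ N + 1)
    (ihrec : ∀ (g : ℝ → ℝ) (α' : ℝ) (A₂ B₂ : List (ℝ × ℝ)), α' ≤ β →
      FamP (Wup g c) α' β A₂ → FamP (Wdn g c) α' β B₂ → A₂.length + B₂.length ≤ N →
      FVal (Wup g c) A₂ + FVal (Wdn g c) B₂ ≤ TVgen (Wtv g c) α' β) :
    FVal (Wup f c) (a₀ :: A') + FVal (Wdn f c) B ≤ TVgen (Wtv f c) α β := by
  classical
  obtain ⟨hαs, hst, htβ, hpos₀⟩ := hA.2 a₀ (by simp)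
  have hA'mem : ∀ x ∈ A', a₀.2 ≤ x.1 := fun x hx => List.rel_of_pairwise_cons hA.1 hx
  have hA'P : ∀ γ, γ ≤ a₀.2 → FamP (Wup f c) γ β A' := by
    intro γ hγ
    refine ⟨hA.1.sublist (List.sublist_cons_self a₀ A'), fun x hx => ?_⟩
    obtain ⟨_, h2, h3, h4⟩ := hA.2 x (by simp [hx])
    exact ⟨le_trans hγ (hA'mem x hx), h2, h3, h4⟩
  -- split B at a₀.2
  obtain ⟨pfx, S, hsplit, hpfx_mem, hShead⟩ :
      ∃ pfx S, pfx ++ S = B ∧ (∀ x ∈ pfx, x.1 < a₀.2) ∧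
        (∀ x R₂, S = x :: R₂ → a₀.2 ≤ x.1) := by
    refine ⟨B.takeWhile (fun x => decide (x.1 < a₀.2)),
      B.dropWhile (fun x => decide (x.1 < a₀.2)),
      List.takeWhile_append_dropWhile (l := B), ?_, ?_⟩
    · intro x hx
      have := List.mem_takeWhile_imp hx
      simpa using this
    · intro x R₂ hxR
      have := dropWhile_head_false _ B x R₂ hxR
      simpa using this
  have hpfx_sub : pfx.Sublist B := hsplit ▸ (List.sublist_append_left pfx S)
  have hS_sub : S.Sublist B := hsplit ▸ (List.sublist_append_right pfx S)
  have hpwPS : (pfx ++ S).Pairwise (fun p q => p.2 ≤ q.1) := by rw [hsplit]; exact hB.1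
  obtain ⟨hpwPfx, hpwS, hcrossPS⟩ := List.pairwise_append.mp hpwPS
  have hSmem : ∀ x ∈ S, a₀.2 ≤ x.1 := by
    cases S with
    | nil => simp
    | cons sh St =>
      intro x hx
      have hsh := hShead sh St rfl
      rcases List.mem_cons.mp hx with rfl | hx'
      · exact hsh
      · have h1 : sh.2 ≤ x.1 := List.rel_of_pairwise_cons hpwS hx'
        have h2 := (hB.2 sh (hS_sub.subset (by simp))).2.1
        exact le_trans hsh (le_trans h2.le h1)
  have hSP : FamP (Wdn f c) a₀.2 β S := by
    refine ⟨hpwS, fun x hx => ?_⟩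
    obtain ⟨_, h2, h3, h4⟩ := hB.2 x (hS_sub.subset hx)
    exact ⟨hSmem x hx, h2, h3, h4⟩
  have hFValB : FVal (Wdn f c) B = FVal (Wdn f c) pfx + FVal (Wdn f c) S := by
    rw [← hsplit, FVal_append]
  have hpfx_pos : ∀ x ∈ pfx, 0 ≤ Wdn f c x.1 x.2 :=
    fun x hx => (hB.2 x (hpfx_sub.subset hx)).2.2.2.le
  have hFValpfx : FVal (Wdn f c) pfx = ENNReal.ofReal (FRaw (Wdn f c) pfx) :=
    FVal_eq_ofReal_FRaw hpfx_pos
  rcases List.eq_nil_or_concat pfx with hpfxnil | ⟨nst, e, hpfxeq⟩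
  rotate_left 0
  · -- no overlapping down pair : split off a₀ alone
    have hSB : S = B := by rw [← hsplit, hpfxnil]; rfl
    have hlen' : A'.length + B.length ≤ N := by
      simp only [List.length_cons] at hlen; omega
    have hrest := ihrec f a₀.2 A' B htβ (hA'P a₀.2 le_rfl) (hSB ▸ hSP) hlen'
    calc FVal (Wup f c) (a₀ :: A') + FVal (Wdn f c) B
        = ENNReal.ofReal (Wup f c a₀.1 a₀.2) + (FVal (Wup f c) A' + FVal (Wdn f c) B) := by
          rw [FVal_cons]; ring
      _ ≤ ENNReal.ofReal (Wtv f c a₀.1 a₀.2) + TVgen (Wtv f c) a₀.2 β := by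
          exact add_le_add (ENNReal.ofReal_le_ofReal (Wup_le_Wtv f c _ _)) hrest
      _ ≤ TVgen (Wtv f c) a₀.1 β := TVgen_concat hst htβ
      _ ≤ TVgen (Wtv f c) α β := TVgen_mono hαs le_rfl
  · -- pfx = nst ++ [e]
    rw [List.concat_eq_append] at hpfxeq
    have he_pfx : e ∈ pfx := by rw [hpfxeq]; simp
    have he_B : e ∈ B := hpfx_sub.subset he_pfx
    obtain ⟨heα, heuv, heβ, hepos⟩ := hB.2 e he_B
    have he1t : e.1 < a₀.2 := hpfx_mem e he_pfx
    have hse1 : a₀.1 ≤ e.1 := hfirst e he_B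
    have hpwPfx2 : (nst ++ [e]).Pairwise (fun p q => p.2 ≤ q.1) := hpfxeq ▸ hpwPfx
    obtain ⟨hpwNst, _, hcrossNE⟩ := List.pairwise_append.mp hpwPfx2
    have hnst_sub : nst.Sublist B := by
      refine List.Sublist.trans ?_ hpfx_sub
      rw [hpfxeq]
      exact List.sublist_append_left nst [e]
    have hnst_bounds : ∀ x ∈ nst, a₀.1 ≤ x.1 ∧ x.1 ≤ x.2 ∧ x.2 ≤ e.1 := by
      intro x hx
      exact ⟨hfirst x (hnst_sub.subset hx), (hB.2 x (hnst_sub.subset hx)).2.1.le,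
        hcrossNE x hx e (by simp)⟩
    have hpfxraw : FRaw (Wdn f c) pfx = FRaw (Wdn f c) nst + Wdn f c e.1 e.2 := by
      rw [hpfxeq, FRaw_append]
      simp [FRaw]
    have hnst_pos : ∀ x ∈ nst, 0 ≤ Wdn f c x.1 x.2 :=
      fun x hx => (hB.2 x (hnst_sub.subset hx)).2.2.2.le
    have hlenB : B.length = nst.length + 1 + S.length := by
      rw [← hsplit, hpfxeq]; simp; omega
    by_cases hnested : e.2 ≤ a₀.2
    · -- all of pfx is nested inside (a₀.1, a₀.2)
      have hpfx_in : ∀ x ∈ pfx, a₀.1 ≤ x.1 ∧ x.1 ≤ x.2 ∧ x.2 ≤ a₀.2 := by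
        intro x hx
        have hxb := hB.2 x (hpfx_sub.subset hx)
        rw [hpfxeq] at hx
        rcases List.mem_append.mp hx with hx' | hx'
        · have h1 := hnst_bounds x hx'
          exact ⟨h1.1, h1.2.1, le_trans h1.2.2 (le_trans heuv.le hnested)⟩
        · simp only [List.mem_singleton] at hx'
          subst hx'
          exact ⟨hse1, heuv.le, hnested⟩
      have hGfam : Fam (Wup f c) a₀.1 a₀.2 (mkGaps a₀.2 a₀.1 pfx) :=
        mkGaps_fam hc pfx a₀.1 hst.le hpfx_in hpwPfx
      have hGfam' : Fam (Wtv f c) a₀.1 β (mkGaps a₀.2 a₀.1 pfx) :=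
        hGfam.relax htβ (Wtv_self_nonpos hc)
      have hGtail := fam_tail (mkGaps a₀.2 a₀.1 pfx) a₀.1 hGfam' (le_trans hst.le htβ)
      rw [mkGaps_endOf] at hGtail
      have hlen' : A'.length + S.length ≤ N := by
        simp only [List.length_cons] at hlen; omega
      have hrest := ihrec f a₀.2 A' S htβ (hA'P a₀.2 le_rfl) hSP hlen'
      have hval1 : ENNReal.ofReal (Wup f c a₀.1 a₀.2) + FVal (Wdn f c) pfx
          ≤ FVal (Wtv f c) (mkGaps a₀.2 a₀.1 pfx) := by
        rw [hFValpfx, ← ENNReal.ofReal_add hpos₀.le (FRaw_nonneg_of hpfx_pos)]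
        refine le_trans ?_ (le_trans (ofReal_FRaw_le (Wup f c) _)
          (FVal_mono_W fun p _ => Wup_le_Wtv f c p.1 p.2))
        rw [mkGaps_raw]
        apply le_of_eq
        congr 1
      calc FVal (Wup f c) (a₀ :: A') + FVal (Wdn f c) B
          = (ENNReal.ofReal (Wup f c a₀.1 a₀.2) + FVal (Wdn f c) pfx)
              + (FVal (Wup f c) A' + FVal (Wdn f c) S) := by
            rw [FVal_cons, hFValB]; ring
        _ ≤ FVal (Wtv f c) (mkGaps a₀.2 a₀.1 pfx) + TVgen (Wtv f c) a₀.2 β :=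
            add_le_add hval1 hrest
        _ ≤ TVgen (Wtv f c) a₀.1 β := hGtail
        _ ≤ TVgen (Wtv f c) α β := TVgen_mono hαs le_rfl
    · -- straddling pair e
      push_neg at hnested
      have hGfam : Fam (Wup f c) a₀.1 e.1 (mkGaps e.1 a₀.1 nst) :=
        mkGaps_fam hc nst a₀.1 hse1 hnst_bounds hpwNst
      have hGfam' : Fam (Wtv f c) a₀.1 β (mkGaps e.1 a₀.1 nst) :=
        hGfam.relax (le_trans he1t.le htβ) (Wtv_self_nonpos hc)
      have hGtail := fam_tail (mkGaps e.1 a₀.1 nst) a₀.1 hGfam'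
        (le_trans hse1 (le_trans he1t.le htβ))
      rw [mkGaps_endOf] at hGtail
      -- the raw identity
      have hkey : Wup f c a₀.1 a₀.2 + FRaw (Wdn f c) pfx
          = ((f e.1 - f a₀.1 - c) + FRaw (Wdn f c) nst) + Wdn f c a₀.2 e.2 := by
        rw [hpfxraw]
        simp only [Wup, Wdn]
        ring
      have hval1 : ENNReal.ofReal (Wup f c a₀.1 a₀.2) + FVal (Wdn f c) pfx
          ≤ FVal (Wtv f c) (mkGaps e.1 a₀.1 nst) + ENNReal.ofReal (Wdn f c a₀.2 e.2) := by
        rw [hFValpfx, ← ENNReal.ofReal_add hpos₀.le (FRaw_nonneg_of hpfx_pos), hkey]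
        refine le_trans ENNReal.ofReal_add_le (add_le_add ?_ le_rfl)
        refine le_trans ?_ (le_trans (ofReal_FRaw_le (Wup f c) _)
          (FVal_mono_W fun p _ => Wup_le_Wtv f c p.1 p.2))
        rw [mkGaps_raw]
      -- the rest system
      by_cases hWdn : 0 < Wdn f c a₀.2 e.2
      · have hB₂ : FamP (Wdn f c) e.1 β ((a₀.2, e.2) :: S) := by
          constructor
          · rw [List.pairwise_cons]
            refine ⟨fun x hx => ?_, hSP.1⟩
            exact le_trans (hcrossPS e he_pfx x hx) (le_rfl)
          · intro x hx
            rcases List.mem_cons.mp hx with rfl | hx'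
            · exact ⟨he1t.le, hnested, heβ, hWdn⟩
            · obtain ⟨h1, h2, h3, h4⟩ := hSP.2 x hx'
              exact ⟨le_trans he1t.le h1, h2, h3, h4⟩
        have hlen' : A'.length + ((a₀.2, e.2) :: S).length ≤ N := by
          simp only [List.length_cons] at hlen ⊢; omega
        have hrest := ihrec f e.1 A' ((a₀.2, e.2) :: S) (le_trans he1t.le htβ)
          (hA'P e.1 he1t.le) hB₂ hlen'
        calc FVal (Wup f c) (a₀ :: A') + FVal (Wdn f c) B
            = (ENNReal.ofReal (Wup f c a₀.1 a₀.2) + FVal (Wdn f c) pfx)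
                + (FVal (Wup f c) A' + FVal (Wdn f c) S) := by
              rw [FVal_cons, hFValB]; ring
          _ ≤ (FVal (Wtv f c) (mkGaps e.1 a₀.1 nst) + ENNReal.ofReal (Wdn f c a₀.2 e.2))
                + (FVal (Wup f c) A' + FVal (Wdn f c) S) := add_le_add hval1 le_rfl
          _ = FVal (Wtv f c) (mkGaps e.1 a₀.1 nst)
                + (FVal (Wup f c) A' + FVal (Wdn f c) ((a₀.2, e.2) :: S)) := by
              rw [FVal_cons]; ring
          _ ≤ FVal (Wtv f c) (mkGaps e.1 a₀.1 nst) + TVgen (Wtv f c) e.1 β :=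
              add_le_add le_rfl hrest
          _ ≤ TVgen (Wtv f c) a₀.1 β := hGtail
          _ ≤ TVgen (Wtv f c) α β := TVgen_mono hαs le_rfl
      · have hlen' : A'.length + S.length ≤ N := by
          simp only [List.length_cons] at hlen; omega
        have hrest := ihrec f e.1 A' S (le_trans he1t.le htβ) (hA'P e.1 he1t.le)
          (⟨hSP.1, fun x hx => by
            obtain ⟨h1, h2, h3, h4⟩ := hSP.2 x hx
            exact ⟨le_trans he1t.le h1, h2, h3, h4⟩⟩) hlen'
        have hzero : ENNReal.ofReal (Wdn f c a₀.2 e.2) = 0 :=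
          ENNReal.ofReal_eq_zero.mpr (not_lt.mp hWdn)
        calc FVal (Wup f c) (a₀ :: A') + FVal (Wdn f c) B
            = (ENNReal.ofReal (Wup f c a₀.1 a₀.2) + FVal (Wdn f c) pfx)
                + (FVal (Wup f c) A' + FVal (Wdn f c) S) := by
              rw [FVal_cons, hFValB]; ring
          _ ≤ (FVal (Wtv f c) (mkGaps e.1 a₀.1 nst) + ENNReal.ofReal (Wdn f c a₀.2 e.2))
                + (FVal (Wup f c) A' + FVal (Wdn f c) S) := add_le_add hval1 le_rfl
          _ = FVal (Wtv f c) (mkGaps e.1 a₀.1 nst)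
                + (FVal (Wup f c) A' + FVal (Wdn f c) S) := by rw [hzero]; ring
          _ ≤ FVal (Wtv f c) (mkGaps e.1 a₀.1 nst) + TVgen (Wtv f c) e.1 β :=
              add_le_add le_rfl hrest
          _ ≤ TVgen (Wtv f c) a₀.1 β := hGtail
          _ ≤ TVgen (Wtv f c) α β := TVgen_mono hαs le_rfl

lemma uncross {c : ℝ} (hc : 0 ≤ c) {β : ℝ} :
    ∀ (N : ℕ) (f : ℝ → ℝ) (α : ℝ) (A B : List (ℝ × ℝ)), α ≤ β →
      FamP (Wup f c) α β A → FamP (Wdn f c) α β B → A.length + B.length ≤ N →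
      FVal (Wup f c) A + FVal (Wdn f c) B ≤ TVgen (Wtv f c) α β := by
  intro N
  induction N with
  | zero =>
    intro f α A B hαβ hA hB hlen
    have hA0 : A = [] := List.length_eq_zero_iff.mp (by omega)
    have hB0 : B = [] := List.length_eq_zero_iff.mp (by omega)
    subst hA0; subst hB0
    simp
  | succ N ih =>
    intro f α A B hαβ hA hB hlen
    match A, B with
    | [], B =>
      simp only [FVal_nil, zero_add]
      calc FVal (Wdn f c) B ≤ FVal (Wtv f c) B :=
            FVal_mono_W fun p _ => Wdn_le_Wtv f c p.1 p.2
        _ ≤ TVgen (Wtv f c) α β := fam_le hB.toFamW hαβ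
    | (a₀ :: A'), [] =>
      simp only [FVal_nil, add_zero]
      calc FVal (Wup f c) (a₀ :: A') ≤ FVal (Wtv f c) (a₀ :: A') :=
            FVal_mono_W fun p _ => Wup_le_Wtv f c p.1 p.2
        _ ≤ TVgen (Wtv f c) α β := fam_le hA.toFamW hαβ
    | (a₀ :: A'), (b₀ :: B') =>
      by_cases hfirst : a₀.1 ≤ b₀.1
      · refine resolve f hc hαβ a₀ A' (b₀ :: B') N hA hB ?_ hlen ?_
        · intro x hx
          rcases List.mem_cons.mp hx with rfl | hx'
          · exact hfirst
          · have h1 : b₀.2 ≤ x.1 := List.rel_of_pairwise_cons hB.1 hx'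
            have h2 := (hB.2 b₀ (by simp)).2.1
            exact le_trans hfirst (le_trans h2.le h1)
        · intro g α' A₂ B₂ hαβ' hA₂ hB₂ hlen₂
          exact ih g α' A₂ B₂ hαβ' hA₂ hB₂ hlen₂
      · push_neg at hfirst
        have hres := resolve (fun x => -f x) hc hαβ b₀ B' (a₀ :: A') N
          (by rw [Wup_neg]; exact hB) (by rw [Wdn_neg]; exact hA)
          ?_ (by simp only [List.length_cons] at hlen ⊢; omega) ?_
        · rw [Wup_neg, Wdn_neg, TVgen_congr (fun p q => by rw [Wtv_neg]) α β] at hres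
          rw [add_comm]
          exact hres
        · intro x hx
          rcases List.mem_cons.mp hx with rfl | hx'
          · exact hfirst.le
          · have h1 : a₀.2 ≤ x.1 := List.rel_of_pairwise_cons hA.1 hx'
            have h2 := (hA.2 a₀ (by simp)).2.1
            exact le_trans hfirst.le (le_trans h2.le h1)
        · intro g α' A₂ B₂ hαβ' hA₂ hB₂ hlen₂
          exact ih g α' A₂ B₂ hαβ' hA₂ hB₂ hlen₂

/-- the key inequality `UTVc + DTVc ≤ TVc` -/
lemma utvc_add_dtvc_le {f : ℝ → ℝ} {c : ℝ} (hc : 0 ≤ c) {a b : ℝ} (hab : a ≤ b) :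
    UTVc f c a b + DTVc f c a b ≤ TVc f c a b := by
  rcases eq_or_ne (TVc f c a b) ⊤ with htop | htop
  · rw [htop]; exact le_top
  refine ENNReal.le_of_forall_pos_le_add (fun ε hε _ => ?_)
  have hεhalf : ((ε : ENNReal) / 2) ≠ 0 := by
    simp only [ne_eq, ENNReal.div_eq_zero_iff]
    push_neg
    exact ⟨by exact_mod_cast hε.ne', by norm_num⟩
  have hU : UTVc f c a b ≠ ⊤ := ne_top_of_le_ne_top htop (UTVc_le_TVc f c a b)
  have hD : DTVc f c a b ≠ ⊤ := ne_top_of_le_ne_top htop (DTVc_le_TVc f c a b)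
  obtain ⟨np, p, hp, hple⟩ := exists_part_near (W := Wup f c) hab
    (by rw [← UTVc_eq]; exact hU) hεhalf
  obtain ⟨nq, q, hq, hqle⟩ := exists_part_near (W := Wdn f c) hab
    (by rw [← DTVc_eq]; exact hD) hεhalf
  have hA := extr_famP (W := Wup f c) hp
  have hB := extr_famP (W := Wdn f c) hq
  have hcore := uncross hc ((extr (Wup f c) p np).length + (extr (Wdn f c) q nq).length)
    f a (extr (Wup f c) p np) (extr (Wdn f c) q nq) hab hA hB le_rfl
  have h1 : UTVc f c a b ≤ FVal (Wup f c) (extr (Wup f c) p np) + (ε : ENNReal) / 2 := by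
    rw [UTVc_eq, extr_fval]; exact hple
  have h2 : DTVc f c a b ≤ FVal (Wdn f c) (extr (Wdn f c) q nq) + (ε : ENNReal) / 2 := by
    rw [DTVc_eq, extr_fval]; exact hqle
  calc UTVc f c a b + DTVc f c a b
      ≤ (FVal (Wup f c) (extr (Wup f c) p np) + (ε : ENNReal) / 2)
          + (FVal (Wdn f c) (extr (Wdn f c) q nq) + (ε : ENNReal) / 2) := add_le_add h1 h2
    _ = (FVal (Wup f c) (extr (Wup f c) p np) + FVal (Wdn f c) (extr (Wdn f c) q nq))
          + ((ε : ENNReal) / 2 + (ε : ENNReal) / 2) := by ring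
    _ ≤ TVgen (Wtv f c) a b + (ε : ENNReal) := by
        rw [ENNReal.add_halves]
        exact add_le_add hcore le_rfl
    _ = TVc f c a b + (ε : ENNReal) := by rw [TVc_eq]

end Uncross

section Assembly

lemma UTVc_neg (f : ℝ → ℝ) (c a t : ℝ) : UTVc (fun x => -f x) c a t = DTVc f c a t := by
  rw [UTVc_eq, DTVc_eq]
  exact TVgen_congr (fun p q => by rw [Wup_neg]) a t

lemma DTVc_neg (f : ℝ → ℝ) (c a t : ℝ) : DTVc (fun x => -f x) c a t = UTVc f c a t := by
  rw [UTVc_eq, DTVc_eq]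
  exact TVgen_congr (fun p q => by rw [Wdn_neg]) a t

lemma ofReal_sum_of_nonneg' {n : ℕ} {g : ℕ → ℝ} (h : ∀ i ∈ Finset.range n, 0 ≤ g i) :
    ∑ i ∈ Finset.range n, ENNReal.ofReal (g i) = ENNReal.ofReal (∑ i ∈ Finset.range n, g i) :=
  (ENNReal.ofReal_sum_of_nonneg h).symm

end Assembly

theorem inf_tv_osc' (a b : ℝ) (hab : a < b) (f : ℝ → ℝ) (c : ℝ) (hc : 0 < c) :
    (∃ h : ℝ → ℝ, (∀ s ∈ Set.Icc a b, ∀ u ∈ Set.Icc a b, |h s - h u| ≤ c) ∧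
        TVar (fun t => f t + h t) a b = TVc f c a b) ∧
    (∀ h : ℝ → ℝ, (∀ s ∈ Set.Icc a b, ∀ u ∈ Set.Icc a b, |h s - h u| ≤ c) →
        TVc f c a b ≤ TVar (fun t => f t + h t) a b) := by
  constructor
  · by_cases htop : TVc f c a b = ⊤
    · refine ⟨0, fun s _ u _ => by simpa using hc.le, ?_⟩
      rw [htop]
      rw [← top_le_iff]
      rw [← htop]
      exact part2 hc.le f 0 (fun s _ u _ => by simpa using hc.le)
    · -- main construction
      have hU : UTVc f c a b ≠ ⊤ := ne_top_of_le_ne_top htop (UTVc_le_TVc f c a b)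
      have hD : DTVc f c a b ≠ ⊤ := ne_top_of_le_ne_top htop (DTVc_le_TVc f c a b)
      have hUx : ∀ x, x ≤ b → UTVc f c a x ≠ ⊤ := by
        intro x hx
        refine ne_top_of_le_ne_top hU ?_
        rw [UTVc_eq, UTVc_eq]
        exact TVgen_mono le_rfl hx
      have hDx : ∀ x, x ≤ b → DTVc f c a x ≠ ⊤ := by
        intro x hx
        refine ne_top_of_le_ne_top hD ?_
        rw [DTVc_eq, DTVc_eq]
        exact TVgen_mono le_rfl hx
      set uu : ℝ → ℝ := fun x => (UTVc f c a x).toReal with huu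
      set dd : ℝ → ℝ := fun x => (DTVc f c a x).toReal with hdd
      have humono : ∀ x y, x ≤ y → y ≤ b → uu x ≤ uu y := by
        intro x y hxy hyb
        refine ENNReal.toReal_mono (hUx y hyb) ?_
        rw [UTVc_eq, UTVc_eq]
        exact TVgen_mono le_rfl hxy
      have hdmono : ∀ x y, x ≤ y → y ≤ b → dd x ≤ dd y := by
        intro x y hxy hyb
        refine ENNReal.toReal_mono (hDx y hyb) ?_
        rw [DTVc_eq, DTVc_eq]
        exact TVgen_mono le_rfl hxy
      -- the two corridor inequalities
      have hclaim : ∀ x y, a ≤ x → x ≤ y → y ≤ b →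
          uu x + (dd y - dd x) + (f y - f x) - c ≤ uu y := by
        intro x y hax hxy hyb
        exact claimA f hc.le hU hD hax hxy hyb
      have hclaim' : ∀ x y, a ≤ x → x ≤ y → y ≤ b →
          dd x + (uu y - uu x) + (f x - f y) - c ≤ dd y := by
        intro x y hax hxy hyb
        have hUn : UTVc (fun z => -f z) c a b ≠ ⊤ := by rw [UTVc_neg]; exact hD
        have hDn : DTVc (fun z => -f z) c a b ≠ ⊤ := by rw [DTVc_neg]; exact hU
        have := claimA (fun z => -f z) hc.le hUn hDn hax hxy hyb
        simp only [UTVc_neg, DTVc_neg] at this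
        simp only [huu, hdd]
        linarith [this]
      refine ⟨fun t => f a + (uu t - dd t) - f t, ?_, ?_⟩
      · -- oscillation bound
        intro x hx y hy
        have key : ∀ x y, x ∈ Set.Icc a b → y ∈ Set.Icc a b → x ≤ y →
            |f a + (uu x - dd x) - f x - (f a + (uu y - dd y) - f y)| ≤ c := by
          intro x y hx hy hxy
          rw [abs_le]
          constructor
          · have := hclaim' x y hx.1 hxy hy.2
            linarith
          · have := hclaim x y hx.1 hxy hy.2
            linarith
        rcases le_total x y with hxy | hxy
        · exact key x y hx hy hxy
        · rw [abs_sub_comm]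
          exact key y x hy hx hxy
      · -- total variation equality
        have hfun : (fun t => f t + (f a + (uu t - dd t) - f t))
            = fun t => f a + (uu t - dd t) := by
          funext t; ring
        refine le_antisymm ?_ ?_
        · rw [hfun, TVar_eq]
          have hbound : TVgen (fun p q => dist (f a + (uu q - dd q)) (f a + (uu p - dd p))) a b
              ≤ ENNReal.ofReal (uu b + dd b) := by
            unfold TVgen
            refine iSup_le fun n => iSup_le fun t => iSup_le fun ht => ?_
            have hnn : ∀ i ∈ Finset.range n,
                0 ≤ dist (f a + (uu (t (i+1)) - dd (t (i+1)))) (f a + (uu (t i) - dd (t i))) :=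
              fun i _ => dist_nonneg
            rw [ofReal_sum_of_nonneg' hnn]
            refine ENNReal.ofReal_le_ofReal ?_
            have hterm : ∀ i ∈ Finset.range n,
                dist (f a + (uu (t (i+1)) - dd (t (i+1)))) (f a + (uu (t i) - dd (t i)))
                  ≤ (uu (t (i+1)) - uu (t i)) + (dd (t (i+1)) - dd (t i)) := by
              intro i hi
              have hin : i < n := Finset.mem_range.mp hi
              have h1 := Part.mem ht (le_of_lt hin)
              have h2 := Part.mem ht (by omega : i + 1 ≤ n)
              have hle : t i ≤ t (i+1) := (ht.2.2 i hin).le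
              have hu1 := humono (t i) (t (i+1)) hle h2.2
              have hd1 := hdmono (t i) (t (i+1)) hle h2.2
              rw [Real.dist_eq, abs_le]
              constructor <;> [skip; skip] <;> nlinarith [hu1, hd1]
            calc ∑ i ∈ Finset.range n,
                dist (f a + (uu (t (i+1)) - dd (t (i+1)))) (f a + (uu (t i) - dd (t i)))
                ≤ ∑ i ∈ Finset.range n,
                    ((uu (t (i+1)) - uu (t i)) + (dd (t (i+1)) - dd (t i))) :=
                  Finset.sum_le_sum hterm
              _ = (uu (t n) - uu (t 0)) + (dd (t n) - dd (t 0)) := by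
                  rw [Finset.sum_add_distrib, Finset.sum_range_sub (fun i => uu (t i)),
                    Finset.sum_range_sub (fun i => dd (t i))]
              _ ≤ uu b + dd b := by
                  have h1 := humono (t n) b ht.2.1 le_rfl
                  have h2 := hdmono (t n) b ht.2.1 le_rfl
                  have h3 : 0 ≤ uu (t 0) := ENNReal.toReal_nonneg
                  have h4 : 0 ≤ dd (t 0) := ENNReal.toReal_nonneg
                  linarith
          refine le_trans hbound ?_
          have heq : ENNReal.ofReal (uu b + dd b) = UTVc f c a b + DTVc f c a b := by
            rw [ENNReal.ofReal_add ENNReal.toReal_nonneg ENNReal.toReal_nonneg,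
              ENNReal.ofReal_toReal hU, ENNReal.ofReal_toReal hD]
          rw [heq]
          exact utvc_add_dtvc_le hc.le hab.le
        · refine part2 hc.le f _ ?_
          intro x hx y hy
          -- same oscillation bound as above
          have key : ∀ x y, x ∈ Set.Icc a b → y ∈ Set.Icc a b → x ≤ y →
              |f a + (uu x - dd x) - f x - (f a + (uu y - dd y) - f y)| ≤ c := by
            intro x y hx hy hxy
            rw [abs_le]
            constructor
            · have := hclaim' x y hx.1 hxy hy.2
              linarith
            · have := hclaim x y hx.1 hxy hy.2
              linarith
          rcases le_total x y with hxy | hxy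
          · exact key x y hx hy hxy
          · rw [abs_sub_comm]
            exact key y x hy hx hxy
  · intro h hosc
    exact part2 hc.le f h hosc

end TVAux

/-- The infimum of `TV(f+h,[a,b])` over `h` with oscillation at most `c`
equals `TV^c(f,[a,b])`, and it is attained. -/
theorem inf_tv_osc (a b : ℝ) (hab : a < b) (f : ℝ → ℝ)
    (hf : Cadlag f a b) (c : ℝ) (hc : 0 < c) :
    (∃ h : ℝ → ℝ, (∀ s ∈ Set.Icc a b, ∀ u ∈ Set.Icc a b, |h s - h u| ≤ c) ∧
        TVar (fun t => f t + h t) a b = TVc f c a b) ∧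
    (∀ h : ℝ → ℝ, (∀ s ∈ Set.Icc a b, ∀ u ∈ Set.Icc a b, |h s - h u| ≤ c) →
        TVc f c a b ≤ TVar (fun t => f t + h t) a b) :=
  TVAux.inf_tv_osc' a b hab f c hc
end

section
/- For a càdlàg function f : [a,b] → ℝ and c > 0, and for every s ∈ (a,b], the truncated variation decomposes as the sum of the upward and downward truncated variations: TV^c(f,[a,s]) = UTV^c(f,[a,s]) + DTV^c(f,[a,s]). -/
open Set Filter

noncomputable section TVAux

def ChIn (s : ℝ) : ℝ → List (ℝ × ℝ) → Prop
  | _, [] => True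
  | lb, p :: r => lb ≤ p.1 ∧ p.1 < p.2 ∧ p.2 ≤ s ∧ ChIn s p.2 r

def uS (f : ℝ → ℝ) (c : ℝ) : List (ℝ × ℝ) → ENNReal
  | [] => 0
  | p :: r => ENNReal.ofReal (f p.2 - f p.1 - c) + uS f c r

def dS (f : ℝ → ℝ) (c : ℝ) : List (ℝ × ℝ) → ENNReal
  | [] => 0
  | p :: r => ENNReal.ofReal (f p.1 - f p.2 - c) + dS f c r

def tS (f : ℝ → ℝ) (c : ℝ) : List (ℝ × ℝ) → ENNReal
  | [] => 0
  | p :: r => ENNReal.ofReal (dist (f p.2) (f p.1) - c) + tS f c r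

lemma ofReal_up_le (f : ℝ → ℝ) (c x y : ℝ) :
    ENNReal.ofReal (f y - f x - c) ≤ ENNReal.ofReal (dist (f y) (f x) - c) := by
  apply ENNReal.ofReal_le_ofReal
  have := le_abs_self (f y - f x)
  rw [Real.dist_eq]; linarith

lemma ofReal_down_le (f : ℝ → ℝ) (c x y : ℝ) :
    ENNReal.ofReal (f x - f y - c) ≤ ENNReal.ofReal (dist (f y) (f x) - c) := by
  apply ENNReal.ofReal_le_ofReal
  have := neg_abs_le (f y - f x)
  rw [Real.dist_eq]; linarith

lemma uS_le_tS (f : ℝ → ℝ) (c : ℝ) : ∀ r, uS f c r ≤ tS f c r := by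
  intro r; induction r with
  | nil => simp [uS, tS]
  | cons p r ih => simpa [uS, tS] using add_le_add (ofReal_up_le f c p.1 p.2) ih

lemma dS_le_tS (f : ℝ → ℝ) (c : ℝ) : ∀ r, dS f c r ≤ tS f c r := by
  intro r; induction r with
  | nil => simp [dS, tS]
  | cons p r ih => simpa [dS, tS] using add_le_add (ofReal_down_le f c p.1 p.2) ih

lemma chin_mono {s lb lb' : ℝ} {r : List (ℝ × ℝ)} (h : ChIn s lb r) (hle : lb' ≤ lb) :
    ChIn s lb' r := by
  cases r with
  | nil => trivial
  | cons p r => exact ⟨le_trans hle h.1, h.2⟩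

lemma KI {A B v d c : ℝ} (h : A + B = v + d) (hv : c < v) (hd : c < d) :
    ENNReal.ofReal (v - c) ≤ ENNReal.ofReal (A - c) + ENNReal.ofReal (B - c) := by
  rcases le_or_gt A c with hA | hA
  · exact le_trans (ENNReal.ofReal_le_ofReal (by linarith)) le_add_self
  rcases le_or_gt B c with hB | hB
  · exact le_trans (ENNReal.ofReal_le_ofReal (by linarith)) le_self_add
  · calc ENNReal.ofReal (v - c) ≤ ENNReal.ofReal ((A - c) + (B - c)) :=
        ENNReal.ofReal_le_ofReal (by linarith)
      _ = _ := ENNReal.ofReal_add (by linarith) (by linarith)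

lemma combine (f : ℝ → ℝ) (c s : ℝ) (hc : 0 < c) :
    ∀ N : ℕ, ∀ (lb : ℝ) (p q : List (ℝ × ℝ)), p.length + q.length ≤ N →
      ChIn s lb p → ChIn s lb q →
      ∃ r, ChIn s lb r ∧ uS f c p + dS f c q ≤ tS f c r := by
  intro N
  induction N with
  | zero =>
    intro lb p q hlen hp hq
    have hp0 : p = [] := List.length_eq_zero_iff.mp (by omega)
    have hq0 : q = [] := List.length_eq_zero_iff.mp (by omega)
    subst hp0; subst hq0
    exact ⟨[], trivial, by simp [uS, dS, tS]⟩
  | succ N ih =>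
    intro lb p q hlen hp hq
    rcases p with _ | ⟨⟨i, j⟩, p'⟩
    · exact ⟨q, hq, by simpa [uS] using dS_le_tS f c q⟩
    rcases q with _ | ⟨⟨k, l⟩, q'⟩
    · exact ⟨(i, j) :: p', hp, by simpa [dS] using uS_le_tS f c ((i, j) :: p')⟩
    obtain ⟨hlbi, hij, hjs, hp'⟩ := hp
    obtain ⟨hlbk, hkl, hls, hq'⟩ := hq
    simp only [List.length_cons] at hlen
    by_cases hjk : j ≤ k
    · -- up pair entirely before down chain
      obtain ⟨r, hr, hsum⟩ := ih j p' ((k, l) :: q') (by simp only [List.length_cons]; omega) hp' ⟨hjk, hkl, hls, hq'⟩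
      refine ⟨(i, j) :: r, ⟨hlbi, hij, hjs, hr⟩, ?_⟩
      simp only [uS, tS, add_assoc]
      exact add_le_add (ofReal_up_le f c i j) hsum
    by_cases hli : l ≤ i
    · obtain ⟨r, hr, hsum⟩ := ih l ((i, j) :: p') q' (by simp only [List.length_cons]; omega) ⟨hli, hij, hjs, hp'⟩ hq'
      refine ⟨(k, l) :: r, ⟨hlbk, hkl, hls, hr⟩, ?_⟩
      simp only [uS, dS, tS]
      calc uS f c ((i,j)::p') + (ENNReal.ofReal (f k - f l - c) + dS f c q')
          = ENNReal.ofReal (f k - f l - c) + (uS f c ((i,j)::p') + dS f c q') := by ring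
        _ ≤ ENNReal.ofReal (dist (f l) (f k) - c) + tS f c r :=
            add_le_add (ofReal_down_le f c k l) hsum
    push_neg at hjk hli
    -- overlap: k < j and i < l
    by_cases hvc : f j - f i ≤ c
    · obtain ⟨r, hr, hsum⟩ := ih lb p' ((k, l) :: q') (by simp only [List.length_cons]; omega)
        (chin_mono hp' (hlbi.trans hij.le)) ⟨hlbk, hkl, hls, hq'⟩
      refine ⟨r, hr, ?_⟩
      have h0 : ENNReal.ofReal (f j - f i - c) = 0 := by
        simp [ENNReal.ofReal_eq_zero]; linarith
      simpa [uS, dS, h0] using hsum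
    by_cases hdc : f k - f l ≤ c
    · obtain ⟨r, hr, hsum⟩ := ih lb ((i, j) :: p') q' (by simp only [List.length_cons]; omega)
        ⟨hlbi, hij, hjs, hp'⟩ (chin_mono hq' (hlbk.trans hkl.le))
      refine ⟨r, hr, ?_⟩
      have h0 : ENNReal.ofReal (f k - f l - c) = 0 := by
        simp [ENNReal.ofReal_eq_zero]; linarith
      simpa [uS, dS, h0] using hsum
    push_neg at hvc hdc
    rcases le_or_gt i k with hik | hki
    · -- up pair starts first
      rcases le_or_gt l j with hlj | hjl
      · -- nested: i ≤ k < l ≤ j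
        rcases lt_or_eq_of_le hlj with hlj' | hlj'
        · -- l < j
          obtain ⟨r, hr, hsum⟩ := ih l ((l, j) :: p') q'
            (by simp only [List.length_cons]; omega) ⟨le_refl l, hlj', hjs, hp'⟩ hq'
          have hKI : ENNReal.ofReal (f j - f i - c) ≤
              ENNReal.ofReal (f k - f i - c) + ENNReal.ofReal (f j - f l - c) :=
            KI (by ring) hvc hdc
          simp only [uS, dS, tS] at hsum ⊢
          rcases lt_or_eq_of_le hik with hik' | hik'
          · refine ⟨(i, k) :: (k, l) :: r,
              ⟨hlbi, hik', hkl.le.trans hls, le_refl k, hkl, hls, hr⟩, ?_⟩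
            simp only [tS]
            calc ENNReal.ofReal (f j - f i - c) + uS f c p' +
                  (ENNReal.ofReal (f k - f l - c) + dS f c q')
                ≤ (ENNReal.ofReal (f k - f i - c) + ENNReal.ofReal (f j - f l - c)) + uS f c p' +
                  (ENNReal.ofReal (f k - f l - c) + dS f c q') :=
                  add_le_add (add_le_add hKI le_rfl) le_rfl
              _ = ENNReal.ofReal (f k - f i - c) + (ENNReal.ofReal (f k - f l - c) +
                  (ENNReal.ofReal (f j - f l - c) + uS f c p' + dS f c q')) := by ring
              _ ≤ ENNReal.ofReal (dist (f k) (f i) - c) +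
                  (ENNReal.ofReal (dist (f l) (f k) - c) + tS f c r) :=
                  add_le_add (ofReal_up_le f c i k) (add_le_add (ofReal_down_le f c k l) hsum)
          · -- i = k
            subst hik'
            refine ⟨(i, l) :: r, ⟨hlbi, hkl, hls, hr⟩, ?_⟩
            simp only [tS]
            have hv' : ENNReal.ofReal (f j - f i - c) ≤ ENNReal.ofReal (f j - f l - c) :=
              ENNReal.ofReal_le_ofReal (by linarith)
            calc ENNReal.ofReal (f j - f i - c) + uS f c p' +
                  (ENNReal.ofReal (f i - f l - c) + dS f c q')
                ≤ ENNReal.ofReal (f j - f l - c) + uS f c p' +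
                  (ENNReal.ofReal (f i - f l - c) + dS f c q') :=
                  add_le_add (add_le_add hv' le_rfl) le_rfl
              _ = ENNReal.ofReal (f i - f l - c) +
                  (ENNReal.ofReal (f j - f l - c) + uS f c p' + dS f c q') := by ring
              _ ≤ ENNReal.ofReal (dist (f l) (f i) - c) + tS f c r :=
                  add_le_add (ofReal_down_le f c i l) hsum
        · -- l = j
          subst hlj'
          obtain ⟨r, hr, hsum⟩ := ih l p' q' (by omega) hp' hq'
          simp only [uS, dS, tS]
          rcases lt_or_eq_of_le hik with hik' | hik'
          · refine ⟨(i, k) :: (k, l) :: r,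
              ⟨hlbi, hik', hkl.le.trans hls, le_refl k, hkl, hls, hr⟩, ?_⟩
            simp only [tS]
            have hv' : ENNReal.ofReal (f l - f i - c) ≤ ENNReal.ofReal (f k - f i - c) :=
              ENNReal.ofReal_le_ofReal (by linarith)
            calc ENNReal.ofReal (f l - f i - c) + uS f c p' +
                  (ENNReal.ofReal (f k - f l - c) + dS f c q')
                ≤ ENNReal.ofReal (f k - f i - c) + uS f c p' +
                  (ENNReal.ofReal (f k - f l - c) + dS f c q') :=
                  add_le_add (add_le_add hv' le_rfl) le_rfl
              _ = ENNReal.ofReal (f k - f i - c) +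
                  (ENNReal.ofReal (f k - f l - c) + (uS f c p' + dS f c q')) := by ring
              _ ≤ ENNReal.ofReal (dist (f k) (f i) - c) +
                  (ENNReal.ofReal (dist (f l) (f k) - c) + tS f c r) :=
                  add_le_add (ofReal_up_le f c i k) (add_le_add (ofReal_down_le f c k l) hsum)
          · exfalso; subst hik'; linarith
      · -- straddle: i ≤ k < j < l
        rcases le_or_gt (f j) (f k) with hf1 | hf2
        · have hik' : i < k := by
            rcases lt_or_eq_of_le hik with h' | h'
            · exact h'
            · exfalso; subst h'; linarith
          obtain ⟨r, hr, hsum⟩ := ih k p' ((k, l) :: q')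
            (by simp only [List.length_cons]; omega) (chin_mono hp' hjk.le)
            ⟨le_refl k, hkl, hls, hq'⟩
          refine ⟨(i, k) :: r, ⟨hlbi, hik', hjk.le.trans hjs, hr⟩, ?_⟩
          simp only [uS, tS]
          calc ENNReal.ofReal (f j - f i - c) + uS f c p' + dS f c ((k, l) :: q')
              ≤ ENNReal.ofReal (f k - f i - c) + uS f c p' + dS f c ((k, l) :: q') :=
                add_le_add (add_le_add (ENNReal.ofReal_le_ofReal (by linarith)) le_rfl) le_rfl
            _ = ENNReal.ofReal (f k - f i - c) + (uS f c p' + dS f c ((k, l) :: q')) := by ring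
            _ ≤ ENNReal.ofReal (dist (f k) (f i) - c) + tS f c r :=
                add_le_add (ofReal_up_le f c i k) hsum
        · obtain ⟨r, hr, hsum⟩ := ih j p' ((j, l) :: q')
            (by simp only [List.length_cons]; omega) hp' ⟨le_refl j, hjl, hls, hq'⟩
          refine ⟨(i, j) :: r, ⟨hlbi, hij, hjs, hr⟩, ?_⟩
          simp only [uS, dS, tS] at hsum ⊢
          have hd' : ENNReal.ofReal (f k - f l - c) ≤ ENNReal.ofReal (f j - f l - c) :=
            ENNReal.ofReal_le_ofReal (by linarith)
          calc ENNReal.ofReal (f j - f i - c) + uS f c p' +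
                (ENNReal.ofReal (f k - f l - c) + dS f c q')
              ≤ ENNReal.ofReal (f j - f i - c) + uS f c p' +
                (ENNReal.ofReal (f j - f l - c) + dS f c q') :=
                add_le_add le_rfl (add_le_add hd' le_rfl)
            _ = ENNReal.ofReal (f j - f i - c) +
                (uS f c p' + (ENNReal.ofReal (f j - f l - c) + dS f c q')) := by ring
            _ ≤ ENNReal.ofReal (dist (f j) (f i) - c) + tS f c r :=
                add_le_add (ofReal_up_le f c i j) hsum
    · -- k < i : down pair starts first
      rcases le_or_gt j l with hjl | hlj
      · -- nested: k < i < j ≤ l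
        rcases lt_or_eq_of_le hjl with hjl' | hjl'
        · obtain ⟨r, hr, hsum⟩ := ih j p' ((j, l) :: q')
            (by simp only [List.length_cons]; omega) hp' ⟨le_refl j, hjl', hls, hq'⟩
          have hKI : ENNReal.ofReal (f k - f l - c) ≤
              ENNReal.ofReal (f k - f i - c) + ENNReal.ofReal (f j - f l - c) :=
            KI (by ring) hdc hvc
          refine ⟨(k, i) :: (i, j) :: r,
            ⟨hlbk, hki, hij.le.trans hjs, le_refl i, hij, hjs, hr⟩, ?_⟩
          simp only [uS, dS, tS] at hsum ⊢
          calc ENNReal.ofReal (f j - f i - c) + uS f c p' +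
                (ENNReal.ofReal (f k - f l - c) + dS f c q')
              ≤ ENNReal.ofReal (f j - f i - c) + uS f c p' +
                ((ENNReal.ofReal (f k - f i - c) + ENNReal.ofReal (f j - f l - c)) + dS f c q') :=
                add_le_add le_rfl (add_le_add hKI le_rfl)
            _ = ENNReal.ofReal (f k - f i - c) + (ENNReal.ofReal (f j - f i - c) +
                (uS f c p' + (ENNReal.ofReal (f j - f l - c) + dS f c q'))) := by ring
            _ ≤ ENNReal.ofReal (dist (f i) (f k) - c) +
                (ENNReal.ofReal (dist (f j) (f i) - c) + tS f c r) :=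
                add_le_add (ofReal_down_le f c k i) (add_le_add (ofReal_up_le f c i j) hsum)
        · -- j = l
          subst hjl'
          obtain ⟨r, hr, hsum⟩ := ih j p' q' (by omega) hp' hq'
          refine ⟨(k, i) :: (i, j) :: r,
            ⟨hlbk, hki, hij.le.trans hjs, le_refl i, hij, hjs, hr⟩, ?_⟩
          simp only [uS, dS, tS]
          have hd' : ENNReal.ofReal (f k - f j - c) ≤ ENNReal.ofReal (f k - f i - c) :=
            ENNReal.ofReal_le_ofReal (by linarith)
          calc ENNReal.ofReal (f j - f i - c) + uS f c p' +
                (ENNReal.ofReal (f k - f j - c) + dS f c q')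
              ≤ ENNReal.ofReal (f j - f i - c) + uS f c p' +
                (ENNReal.ofReal (f k - f i - c) + dS f c q') :=
                add_le_add le_rfl (add_le_add hd' le_rfl)
            _ = ENNReal.ofReal (f k - f i - c) + (ENNReal.ofReal (f j - f i - c) +
                (uS f c p' + dS f c q')) := by ring
            _ ≤ ENNReal.ofReal (dist (f i) (f k) - c) +
                (ENNReal.ofReal (dist (f j) (f i) - c) + tS f c r) :=
                add_le_add (ofReal_down_le f c k i) (add_le_add (ofReal_up_le f c i j) hsum)
      · -- straddle: k < i < l < j
        rcases le_or_gt (f i) (f l) with hf1 | hf2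
        · obtain ⟨r, hr, hsum⟩ := ih i ((i, j) :: p') q'
            (by simp only [List.length_cons]; omega) ⟨le_refl i, hij, hjs, hp'⟩
            (chin_mono hq' hli.le)
          refine ⟨(k, i) :: r, ⟨hlbk, hki, hij.le.trans hjs, hr⟩, ?_⟩
          simp only [dS, tS]
          have hd' : ENNReal.ofReal (f k - f l - c) ≤ ENNReal.ofReal (f k - f i - c) :=
            ENNReal.ofReal_le_ofReal (by linarith)
          calc uS f c ((i, j) :: p') + (ENNReal.ofReal (f k - f l - c) + dS f c q')
              ≤ uS f c ((i, j) :: p') + (ENNReal.ofReal (f k - f i - c) + dS f c q') :=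
                add_le_add le_rfl (add_le_add hd' le_rfl)
            _ = ENNReal.ofReal (f k - f i - c) + (uS f c ((i, j) :: p') + dS f c q') := by ring
            _ ≤ ENNReal.ofReal (dist (f i) (f k) - c) + tS f c r :=
                add_le_add (ofReal_down_le f c k i) hsum
        · obtain ⟨r, hr, hsum⟩ := ih l ((l, j) :: p') q'
            (by simp only [List.length_cons]; omega) ⟨le_refl l, hlj, hjs, hp'⟩ hq'
          refine ⟨(k, l) :: r, ⟨hlbk, hkl, hls, hr⟩, ?_⟩
          simp only [uS, dS, tS] at hsum ⊢
          have hv' : ENNReal.ofReal (f j - f i - c) ≤ ENNReal.ofReal (f j - f l - c) :=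
            ENNReal.ofReal_le_ofReal (by linarith)
          calc ENNReal.ofReal (f j - f i - c) + uS f c p' +
                (ENNReal.ofReal (f k - f l - c) + dS f c q')
              ≤ ENNReal.ofReal (f j - f l - c) + uS f c p' +
                (ENNReal.ofReal (f k - f l - c) + dS f c q') :=
                add_le_add (add_le_add hv' le_rfl) le_rfl
            _ = ENNReal.ofReal (f k - f l - c) +
                (ENNReal.ofReal (f j - f l - c) + uS f c p' + dS f c q') := by ring
            _ ≤ ENNReal.ofReal (dist (f l) (f k) - c) + tS f c r :=
                add_le_add (ofReal_down_le f c k l) hsum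

def chainOf (t : ℕ → ℝ) : ℕ → ℕ → List (ℝ × ℝ)
  | _, 0 => []
  | i, m + 1 => (t i, t (i + 1)) :: chainOf t (i + 1) m

lemma part_mono {n : ℕ} {t : ℕ → ℝ} (h : ∀ i < n, t i < t (i + 1)) :
    ∀ i j, i ≤ j → j ≤ n → t i ≤ t j := by
  intro i j hij hjn
  induction j, hij using Nat.le_induction with
  | base => exact le_refl _
  | succ j hij ih => exact le_trans (ih (by omega)) (le_of_lt (h j (by omega)))

lemma chainOf_chin {a s : ℝ} {n : ℕ} {t : ℕ → ℝ} (ht : IsPart a s n t) :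
    ∀ m i, i + m ≤ n → ChIn s (t i) (chainOf t i m) := by
  obtain ⟨_, htns, hinc⟩ := ht
  intro m
  induction m with
  | zero => intro i _; trivial
  | succ m ih =>
    intro i him
    exact ⟨le_refl _, hinc i (by omega),
      le_trans (part_mono hinc (i + 1) n (by omega) le_rfl) htns, ih (i + 1) (by omega)⟩

lemma chainOf_uS (f : ℝ → ℝ) (c : ℝ) (t : ℕ → ℝ) :
    ∀ m i, uS f c (chainOf t i m) =
      ∑ j ∈ Finset.range m, ENNReal.ofReal (f (t (i + j + 1)) - f (t (i + j)) - c) := by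
  intro m
  induction m with
  | zero => intro i; simp [chainOf, uS]
  | succ m ih =>
    intro i
    simp only [chainOf, uS]
    rw [ih (i + 1), Finset.sum_range_succ', add_comm]
    congr 1
    exact Finset.sum_congr rfl fun j _ => by
      rw [show i + (j + 1) + 1 = i + 1 + j + 1 by omega, show i + (j + 1) = i + 1 + j by omega]

lemma chainOf_dS (f : ℝ → ℝ) (c : ℝ) (t : ℕ → ℝ) :
    ∀ m i, dS f c (chainOf t i m) =
      ∑ j ∈ Finset.range m, ENNReal.ofReal (f (t (i + j)) - f (t (i + j + 1)) - c) := by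
  intro m
  induction m with
  | zero => intro i; simp [chainOf, dS]
  | succ m ih =>
    intro i
    simp only [chainOf, dS]
    rw [ih (i + 1), Finset.sum_range_succ', add_comm]
    congr 1
    exact Finset.sum_congr rfl fun j _ => by
      rw [show i + (j + 1) + 1 = i + 1 + j + 1 by omega, show i + (j + 1) = i + 1 + j by omega]

lemma chain_part (f : ℝ → ℝ) (c s : ℝ) :
    ∀ (r : List (ℝ × ℝ)) (lb : ℝ), lb ≤ s → ChIn s lb r →
      ∃ (n : ℕ) (t : ℕ → ℝ), IsPart lb s n t ∧
        tS f c r ≤ ∑ i ∈ Finset.range n, ENNReal.ofReal (dist (f (t (i + 1))) (f (t i)) - c) := by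
  intro r
  induction r with
  | nil =>
    intro lb hlb _
    exact ⟨0, fun _ => s, ⟨hlb, le_refl s, fun i hi => absurd hi (Nat.not_lt_zero i)⟩, by
      simp [tS]⟩
  | cons p r ih =>
    obtain ⟨x, y⟩ := p
    intro lb hlb hch
    obtain ⟨hlx, hxy, hys, hr⟩ := hch
    simp only at hlx hxy hys hr
    obtain ⟨n, t, ⟨hyt0, htns, hinc⟩, hsum⟩ := ih y hys hr
    rcases lt_or_eq_of_le hyt0 with hlt | heq
    · -- y < t 0 : prepend both x and y
      refine ⟨n + 2, fun m => match m with | 0 => x | 1 => y | (m + 2) => t m,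
        ⟨hlx, htns, ?_⟩, ?_⟩
      · intro i _
        match i with
        | 0 => exact hxy
        | 1 => exact hlt
        | (m + 2) =>
          show t m < t (m + 1)
          exact hinc m (by omega)
      · rw [Finset.sum_range_succ', Finset.sum_range_succ']
        have e0 : (fun m => match m with | 0 => x | 1 => y | (m + 2) => t m : ℕ → ℝ) 0
            = x := rfl
        have e1 : (fun m => match m with | 0 => x | 1 => y | (m + 2) => t m : ℕ → ℝ) (0 + 1)
            = y := rfl
        have e2 : ∀ m : ℕ,
            (fun m => match m with | 0 => x | 1 => y | (m + 2) => t m : ℕ → ℝ) (m + 1 + 1)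
            = t m := fun _ => rfl
        simp only [e0, e1, e2, tS]
        calc ENNReal.ofReal (dist (f y) (f x) - c) + tS f c r
            ≤ ENNReal.ofReal (dist (f y) (f x) - c) +
              ((∑ i ∈ Finset.range n, ENNReal.ofReal (dist (f (t (i + 1))) (f (t i)) - c)) +
                ENNReal.ofReal (dist (f (t 0)) (f y) - c)) :=
              add_le_add le_rfl (hsum.trans le_self_add)
          _ = (∑ i ∈ Finset.range n, ENNReal.ofReal (dist (f (t (i + 1))) (f (t i)) - c)) +
                ENNReal.ofReal (dist (f (t 0)) (f y) - c) +
              ENNReal.ofReal (dist (f y) (f x) - c) := by ring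
    · -- y = t 0 : prepend x only
      refine ⟨n + 1, fun m => match m with | 0 => x | (m + 1) => t m,
        ⟨hlx, htns, ?_⟩, ?_⟩
      · intro i _
        match i with
        | 0 => show x < t 0; rw [← heq]; exact hxy
        | (m + 1) =>
          show t m < t (m + 1)
          exact hinc m (by omega)
      · rw [Finset.sum_range_succ']
        have e0 : (fun m => match m with | 0 => x | (m + 1) => t m : ℕ → ℝ) 0 = x := rfl
        have e1 : ∀ m : ℕ,
            (fun m => match m with | 0 => x | (m + 1) => t m : ℕ → ℝ) (m + 1) = t m :=
          fun _ => rfl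
        simp only [e0, e1, tS]
        rw [← heq]
        calc ENNReal.ofReal (dist (f y) (f x) - c) + tS f c r
            ≤ ENNReal.ofReal (dist (f y) (f x) - c) +
              ∑ i ∈ Finset.range n, ENNReal.ofReal (dist (f (t (i + 1))) (f (t i)) - c) :=
              add_le_add le_rfl hsum
          _ = (∑ i ∈ Finset.range n, ENNReal.ofReal (dist (f (t (i + 1))) (f (t i)) - c)) +
              ENNReal.ofReal (dist (f y) (f x) - c) := by ring
lemma utvc_eq (f : ℝ → ℝ) (c a s : ℝ) :
    UTVc f c a s = ⨆ p : {p : ℕ × (ℕ → ℝ) // IsPart a s p.1 p.2},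
      ∑ i ∈ Finset.range p.1.1, ENNReal.ofReal (f (p.1.2 (i + 1)) - f (p.1.2 i) - c) := by
  simp only [UTVc]
  apply le_antisymm
  · exact iSup_le fun n => iSup_le fun t => iSup_le fun h => le_iSup_of_le ⟨(n, t), h⟩ le_rfl
  · exact iSup_le fun p => le_iSup_of_le p.1.1 (le_iSup_of_le p.1.2 (le_iSup_of_le p.2 le_rfl))

lemma dtvc_eq (f : ℝ → ℝ) (c a s : ℝ) :
    DTVc f c a s = ⨆ p : {p : ℕ × (ℕ → ℝ) // IsPart a s p.1 p.2},
      ∑ i ∈ Finset.range p.1.1, ENNReal.ofReal (f (p.1.2 i) - f (p.1.2 (i + 1)) - c) := by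
  simp only [DTVc]
  apply le_antisymm
  · exact iSup_le fun n => iSup_le fun t => iSup_le fun h => le_iSup_of_le ⟨(n, t), h⟩ le_rfl
  · exact iSup_le fun p => le_iSup_of_le p.1.1 (le_iSup_of_le p.1.2 (le_iSup_of_le p.2 le_rfl))

lemma key_ineq (f : ℝ → ℝ) (c a s : ℝ) (hc : 0 < c) (has : a < s)
    (n : ℕ) (t : ℕ → ℝ) (ht : IsPart a s n t) (m : ℕ) (u : ℕ → ℝ) (hu : IsPart a s m u) :
    (∑ i ∈ Finset.range n, ENNReal.ofReal (f (t (i + 1)) - f (t i) - c)) +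
      (∑ i ∈ Finset.range m, ENNReal.ofReal (f (u i) - f (u (i + 1)) - c)) ≤ TVc f c a s := by
  have hp : ChIn s a (chainOf t 0 n) := chin_mono (chainOf_chin ht n 0 (by omega)) ht.1
  have hq : ChIn s a (chainOf u 0 m) := chin_mono (chainOf_chin hu m 0 (by omega)) hu.1
  obtain ⟨r, hr, hsum⟩ := combine f c s hc ((chainOf t 0 n).length + (chainOf u 0 m).length)
    a (chainOf t 0 n) (chainOf u 0 m) le_rfl hp hq
  obtain ⟨n', t', ht', hts⟩ := chain_part f c s r a has.le hr
  have h1 := chainOf_uS f c t n 0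
  have h2 := chainOf_dS f c u m 0
  simp only [Nat.zero_add] at h1 h2
  calc (∑ i ∈ Finset.range n, ENNReal.ofReal (f (t (i + 1)) - f (t i) - c)) +
        (∑ i ∈ Finset.range m, ENNReal.ofReal (f (u i) - f (u (i + 1)) - c))
      = uS f c (chainOf t 0 n) + dS f c (chainOf u 0 m) := by rw [h1, h2]
    _ ≤ tS f c r := hsum
    _ ≤ ∑ i ∈ Finset.range n', ENNReal.ofReal (dist (f (t' (i + 1))) (f (t' i)) - c) := hts
    _ ≤ TVc f c a s := by
        simp only [TVc]
        exact le_iSup_of_le n' (le_iSup_of_le t' (le_iSup_of_le ht' le_rfl))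

lemma tvc_le_sum (f : ℝ → ℝ) (c a s : ℝ) : TVc f c a s ≤ UTVc f c a s + DTVc f c a s := by
  simp only [TVc]
  refine iSup_le fun n => iSup_le fun t => iSup_le fun ht => ?_
  calc ∑ i ∈ Finset.range n, ENNReal.ofReal (dist (f (t (i + 1))) (f (t i)) - c)
      ≤ ∑ i ∈ Finset.range n, (ENNReal.ofReal (f (t (i + 1)) - f (t i) - c) +
          ENNReal.ofReal (f (t i) - f (t (i + 1)) - c)) := Finset.sum_le_sum fun i _ => by
        rw [Real.dist_eq]
        rcases le_total (f (t i)) (f (t (i + 1))) with h | h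
        · rw [abs_of_nonneg (by linarith)]
          exact le_self_add
        · rw [abs_of_nonpos (by linarith),
            show -(f (t (i + 1)) - f (t i)) - c = f (t i) - f (t (i + 1)) - c by ring]
          exact le_add_self
    _ = _ := Finset.sum_add_distrib
    _ ≤ UTVc f c a s + DTVc f c a s := add_le_add
        (by simp only [UTVc]
            exact le_iSup_of_le n (le_iSup_of_le t (le_iSup_of_le ht le_rfl)))
        (by simp only [DTVc]
            exact le_iSup_of_le n (le_iSup_of_le t (le_iSup_of_le ht le_rfl)))

end TVAux

/-- `TV^c = UTV^c + DTV^c` on every interval `[a, s]`, `s ∈ (a, b]`. -/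
theorem tvc_eq_utvc_add_dtvc (a b : ℝ) (hab : a < b) (f : ℝ → ℝ)
    (hf : Cadlag f a b) (c : ℝ) (hc : 0 < c) :
    ∀ s ∈ Set.Ioc a b, TVc f c a s = UTVc f c a s + DTVc f c a s := by
  intro s hs
  obtain ⟨has, _⟩ := hs
  haveI hne : Nonempty {p : ℕ × (ℕ → ℝ) // IsPart a s p.1 p.2} :=
    ⟨⟨(0, fun _ => a), ⟨le_refl a, has.le, fun i hi => absurd hi (Nat.not_lt_zero i)⟩⟩⟩
  refine le_antisymm (tvc_le_sum f c a s) ?_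
  rw [utvc_eq, dtvc_eq, ENNReal.iSup_add]
  refine iSup_le fun p => ?_
  rw [ENNReal.add_iSup]
  refine iSup_le fun q => ?_
  exact key_ineq f c a s hc has p.1.1 p.1.2 p.2 q.1.1 q.1.2 q.2
end

section
/- For a càdlàg function f : [a,b] → ℝ and c > 0, the function f^{0,c}(s) := UTV^c(f,[a,s]) − DTV^c(f,[a,s]) satisfies |(f^{0,c}(s) − f^{0,c}(u)) − (f(s) − f(u))| ≤ c for all a ≤ u ≤ s ≤ b, i.e. its increments uniformly approximate the increments of f with accuracy c. -/
open Set Filter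

section Aux

open ENNReal

/-- Real-valued truncated upward sum of a partition. -/
noncomputable def usum (f : ℝ → ℝ) (c : ℝ) (t : ℕ → ℝ) (n : ℕ) : ℝ :=
  ∑ i ∈ Finset.range n, max (f (t (i + 1)) - f (t i) - c) 0

lemma usum_nonneg (f : ℝ → ℝ) (c : ℝ) (t : ℕ → ℝ) (n : ℕ) : 0 ≤ usum f c t n :=
  Finset.sum_nonneg fun _ _ => le_max_right _ _

lemma usum_zero (f : ℝ → ℝ) (c : ℝ) (t : ℕ → ℝ) : usum f c t 0 = 0 := by
  simp [usum]

lemma usum_succ (f : ℝ → ℝ) (c : ℝ) (t : ℕ → ℝ) (n : ℕ) :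
    usum f c t (n + 1) = usum f c t n + max (f (t (n + 1)) - f (t n) - c) 0 :=
  Finset.sum_range_succ _ _

lemma usum_update (f : ℝ → ℝ) (c : ℝ) (t : ℕ → ℝ) (n : ℕ) (v : ℝ) :
    usum f c (Function.update t (n + 1) v) (n + 1)
      = usum f c t n + max (f v - f (t n) - c) 0 := by
  rw [usum_succ]
  congr 1
  · refine Finset.sum_congr rfl fun i hi => ?_
    have hi' : i < n := Finset.mem_range.mp hi
    rw [Function.update_of_ne (by omega), Function.update_of_ne (by omega)]
  · rw [Function.update_self, Function.update_of_ne (by omega)]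

lemma IsPart.mono_le {a b : ℝ} {n : ℕ} {t : ℕ → ℝ} (h : IsPart a b n t)
    {i j : ℕ} (hij : i ≤ j) (hj : j ≤ n) : t i ≤ t j := by
  induction j with
  | zero => rw [Nat.le_zero.mp hij]
  | succ j ih =>
    rcases Nat.lt_or_ge i (j + 1) with h1 | h1
    · exact le_trans (ih (by omega) (by omega)) (le_of_lt (h.2.2 j (by omega)))
    · have : i = j + 1 := by omega
      rw [this]

lemma IsPart.append {a b : ℝ} {n : ℕ} {t : ℕ → ℝ} (h : IsPart a b n t)
    {v b' : ℝ} (hv : t n < v) (hvb : v ≤ b') :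
    IsPart a b' (n + 1) (Function.update t (n + 1) v) := by
  refine ⟨?_, ?_, ?_⟩
  · rw [Function.update_of_ne (by omega)]; exact h.1
  · rw [Function.update_self]; exact hvb
  · intro i hi
    rcases Nat.lt_or_ge i n with h1 | h1
    · rw [Function.update_of_ne (by omega), Function.update_of_ne (by omega)]
      exact h.2.2 i h1
    · have hin : i = n := by omega
      subst hin
      rw [Function.update_of_ne (by omega), Function.update_self]
      exact hv

lemma UTVc_eq (f : ℝ → ℝ) (c a b : ℝ) :
    UTVc f c a b = ⨆ (n : ℕ) (t : ℕ → ℝ) (_ : IsPart a b n t),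
      ENNReal.ofReal (usum f c t n) := by
  unfold UTVc
  refine iSup_congr fun n => iSup_congr fun t => iSup_congr fun h => ?_
  rw [usum, ENNReal.ofReal_sum_of_nonneg (fun i _ => le_max_right _ _)]
  refine Finset.sum_congr rfl fun i _ => ?_
  rcases le_total (f (t (i + 1)) - f (t i) - c) 0 with h1 | h1
  · rw [max_eq_right h1, ENNReal.ofReal_eq_zero.mpr h1, ENNReal.ofReal_zero]
  · rw [max_eq_left h1]

lemma DTVc_eq (f : ℝ → ℝ) (c a b : ℝ) : DTVc f c a b = UTVc (fun x => -f x) c a b := by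
  unfold DTVc UTVc
  refine iSup_congr fun n => iSup_congr fun t => iSup_congr fun h => ?_
  refine Finset.sum_congr rfl fun i _ => ?_
  congr 1
  ring

lemma le_UTVc (f : ℝ → ℝ) (c a b : ℝ) (n : ℕ) (t : ℕ → ℝ) (h : IsPart a b n t) :
    ENNReal.ofReal (usum f c t n) ≤ UTVc f c a b := by
  rw [UTVc_eq]
  exact le_iSup_of_le n (le_iSup_of_le t (le_iSup_of_le h le_rfl))

lemma UTVc_mono (f : ℝ → ℝ) (c a : ℝ) {b b' : ℝ} (h : b ≤ b') :
    UTVc f c a b ≤ UTVc f c a b' := by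
  rw [UTVc_eq f c a b]
  refine iSup_le fun n => iSup_le fun t => iSup_le fun ht => ?_
  exact le_UTVc f c a b' n t ⟨ht.1, le_trans ht.2.1 h, ht.2.2⟩

lemma UTVc_self (f : ℝ → ℝ) (c a : ℝ) : UTVc f c a a = 0 := by
  rw [UTVc_eq]
  refine le_antisymm (iSup_le fun n => iSup_le fun t => iSup_le fun ht => ?_) zero_le
  match n with
  | 0 => simp [usum]
  | Nat.succ k =>
    exfalso
    have h1 : t 0 < t (k + 1) :=
      lt_of_lt_of_le (ht.2.2 0 (Nat.succ_pos k)) (ht.mono_le (by omega) le_rfl)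
    have := ht.1
    have := ht.2.1
    linarith

/-- Base helper: a downward partition of `[u,s]` witnessing `f u - f s - c ≤ dsum`. -/
lemma zlem (f : ℝ → ℝ) (c : ℝ) (hc : 0 < c) {u s : ℝ} (hus : u ≤ s) :
    ∃ k r, IsPart u s k r ∧ f u - f s - c ≤ usum (fun x => -f x) c r k := by
  rcases eq_or_lt_of_le hus with he | hlt
  · exact ⟨0, fun _ => u, ⟨le_rfl, hus, fun i hi => absurd hi (Nat.not_lt_zero i)⟩,
      by rw [usum_zero, ← he]; linarith⟩
  · refine ⟨1, fun i => if i = 0 then u else s, ⟨by simp, by simp, ?_⟩, ?_⟩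
    · intro i hi
      have : i = 0 := by omega
      simp [this, hlt]
    · have : usum (fun x => -f x) c (fun i => if i = 0 then u else s) 1
          = max (-f s - -f u - c) 0 := by
        rw [usum_succ, usum_zero, zero_add]
        norm_num
      rw [this]
      have : f u - f s - c ≤ -f s - -f u - c := by ring_nf; exact le_rfl
      exact le_trans this (le_max_left _ _)

/-- CORE combinatorial lemma: any upward sum over a partition of `[a,s]` is dominated by
an upward sum over `[a,u]` plus a downward sum over `[u,s]` plus `f s - f u + c`. -/
lemma core (f : ℝ → ℝ) (c : ℝ) (hc : 0 < c) (a u : ℝ) (hau : a ≤ u) :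
    ∀ n s t, u ≤ s → IsPart a s n t →
      ∃ m p k r, IsPart a u m p ∧ IsPart u s k r ∧
        usum f c t n ≤ usum f c p m + usum (fun x => -f x) c r k + (f s - f u) + c := by
  intro n
  induction n with
  | zero =>
    intro s t hus ht
    obtain ⟨k, r, hr, hz⟩ := zlem f c hc hus
    refine ⟨0, fun _ => a, k, r,
      ⟨le_rfl, hau, fun i hi => absurd hi (Nat.not_lt_zero i)⟩, hr, ?_⟩
    rw [usum_zero, usum_zero]
    linarith
  | succ n ih =>
    intro s t hus ht
    have htn1 : t (n + 1) ≤ s := ht.2.1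
    have htmono : t n < t (n + 1) := ht.2.2 n (Nat.lt_succ_self n)
    rcases le_or_gt (t (n + 1)) u with h1 | h1
    · -- whole partition within [a,u]
      obtain ⟨k, r, hr, hz⟩ := zlem f c hc hus
      refine ⟨n + 1, t, k, r, ⟨ht.1, h1, ht.2.2⟩, hr, ?_⟩
      linarith
    · rcases le_or_gt (f (t (n + 1)) - f (t n)) c with h2 | h2
      · -- last increment truncated away
        have ht' : IsPart a s n t :=
          ⟨ht.1, le_trans (le_of_lt htmono) htn1, fun i hi => ht.2.2 i (by omega)⟩
        obtain ⟨m, p, k, r, hp, hr, hle⟩ := ih s t hus ht'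
        refine ⟨m, p, k, r, hp, hr, ?_⟩
        rw [usum_succ, max_eq_right (by linarith)]
        linarith
      · rcases le_or_gt u (t n) with h3 | h3
        · -- branch A : t n ≥ u, recurse on [a, t n]
          have ht' : IsPart a (t n) n t := ⟨ht.1, le_rfl, fun i hi => ht.2.2 i (by omega)⟩
          obtain ⟨m, p, k, r, hp, hr, hle⟩ := ih (t n) t h3 ht'
          have hrk : r k < t (n + 1) := lt_of_le_of_lt hr.2.1 htmono
          rcases eq_or_lt_of_le htn1 with h6 | h6
          · -- t (n+1) = s : append t (n+1) to r
            refine ⟨m, p, k + 1, Function.update r (k + 1) (t (n + 1)), hp,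
              hr.append hrk htn1, ?_⟩
            rw [usum_update, usum_succ, max_eq_left (by linarith)]
            have hm : (0:ℝ) ≤ max (-f (t (n + 1)) - -f (r k) - c) 0 := le_max_right _ _
            rw [← h6]
            linarith
          · -- t (n+1) < s : append t (n+1) then s
            have hr1 := hr.append hrk (le_of_lt h6)
            set r1 := Function.update r (k + 1) (t (n + 1)) with hr1def
            have hr1k : r1 (k + 1) = t (n + 1) := Function.update_self _ _ _
            have hr2 := hr1.append (b' := s) (v := s) (by rw [hr1k]; exact h6) le_rfl
            refine ⟨m, p, k + 2, Function.update r1 (k + 2) s, hp, hr2, ?_⟩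
            rw [usum_update, usum_update, hr1k, usum_succ, max_eq_left (by linarith)]
            have hm1 : (0:ℝ) ≤ max (-f (t (n + 1)) - -f (r k) - c) 0 := le_max_right _ _
            have hm2 : -f s - -f (t (n + 1)) - c ≤ max (-f s - -f (t (n + 1)) - c) 0 :=
              le_max_left _ _
            linarith
        · -- branch B : t n < u < t (n+1)
          have ht' : IsPart a u n t := ⟨ht.1, le_of_lt h3, fun i hi => ht.2.2 i (by omega)⟩
          have hp := ht'.append (b' := u) (v := u) h3 le_rfl
          have hup : usum f c (Function.update t (n + 1) u) (n + 1)
              = usum f c t n + max (f u - f (t n) - c) 0 := usum_update f c t n u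
          rcases eq_or_lt_of_le htn1 with h6 | h6
          · refine ⟨n + 1, Function.update t (n + 1) u, 0, fun _ => u, hp,
              ⟨le_rfl, hus, fun i hi => absurd hi (Nat.not_lt_zero i)⟩, ?_⟩
            rw [usum_succ, max_eq_left (by linarith), hup, usum_zero, ← h6]
            have hm : f u - f (t n) - c ≤ max (f u - f (t n) - c) 0 := le_max_left _ _
            linarith
          · refine ⟨n + 1, Function.update t (n + 1) u, 1,
              fun i => if i = 0 then t (n + 1) else s, hp,
              ⟨by simp [le_of_lt h1], by simp, ?_⟩, ?_⟩
            · intro i hi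
              have : i = 0 := by omega
              simp [this, h6]
            · have hz : usum (fun x => -f x) c (fun i => if i = 0 then t (n + 1) else s) 1
                  = max (-f s - -f (t (n + 1)) - c) 0 := by
                rw [usum_succ, usum_zero, zero_add]
                norm_num
              rw [usum_succ, max_eq_left (by linarith), hup, hz]
              have hm : f u - f (t n) - c ≤ max (f u - f (t n) - c) 0 := le_max_left _ _
              have hm2 : -f s - -f (t (n + 1)) - c ≤ max (-f s - -f (t (n + 1)) - c) 0 :=
                le_max_left _ _
              linarith

/-- Concatenation of partitions dominates the sum of the two upward sums. -/
lemma concat (f : ℝ → ℝ) (c : ℝ) {a u s : ℝ} (hau : a ≤ u) (hus : u ≤ s)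
    (m : ℕ) (p : ℕ → ℝ) (hp : IsPart a u m p) :
    ∀ k r, IsPart u s k r → ∃ N q, IsPart a s N q ∧ q N = r k ∧
      usum f c p m + usum f c r k ≤ usum f c q N := by
  intro k
  induction k with
  | zero =>
    intro r hr
    rcases eq_or_lt_of_le (le_trans hp.2.1 hr.1) with h | h
    · exact ⟨m, p, ⟨hp.1, h ▸ hr.2.1, hp.2.2⟩, h, by rw [usum_zero]; linarith⟩
    · refine ⟨m + 1, Function.update p (m + 1) (r 0), hp.append h hr.2.1,
        Function.update_self _ _ _, ?_⟩
      rw [usum_update, usum_zero]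
      have := le_max_right (f (r 0) - f (p m) - c) 0
      linarith
  | succ k ih =>
    intro r hr
    have hrk : r k < r (k + 1) := hr.2.2 k (Nat.lt_succ_self k)
    have hr' : IsPart u s k r :=
      ⟨hr.1, le_trans (le_of_lt hrk) hr.2.1, fun i hi => hr.2.2 i (by omega)⟩
    obtain ⟨N, q, hq, hqN, hle⟩ := ih r hr'
    have hlt : q N < r (k + 1) := hqN ▸ hrk
    refine ⟨N + 1, Function.update q (N + 1) (r (k + 1)), hq.append hlt hr.2.1,
      Function.update_self _ _ _, ?_⟩
    rw [usum_update, usum_succ, hqN]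
    linarith

/-- Oscillation bound: if `f` is within `c/4` of `l` on `[x, s')`, then any upward sum on a
partition of `[x, s']` is at most `|f s' - l|`. -/
lemma osc_bound (f : ℝ → ℝ) {c : ℝ} (hc : 0 < c) {l x s' : ℝ}
    (h : ∀ y, x ≤ y → y < s' → |f y - l| ≤ c / 4) :
    ∀ n t, IsPart x s' n t → usum f c t n ≤ |f s' - l| := by
  intro n
  match n with
  | 0 => intro t ht; rw [usum_zero]; exact abs_nonneg _
  | Nat.succ m =>
    intro t ht
    rw [usum_succ]
    have hb : ∀ i, i ≤ m + 1 → x ≤ t i := fun i hi =>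
      le_trans ht.1 (ht.mono_le (Nat.zero_le i) hi)
    have hlt : ∀ i, i ≤ m → t i < s' := fun i hi =>
      lt_of_le_of_lt (ht.mono_le hi (by omega))
        (lt_of_lt_of_le (ht.2.2 m (Nat.lt_succ_self m)) ht.2.1)
    have h0 : usum f c t m = 0 := by
      refine Finset.sum_eq_zero fun i hi => ?_
      have hi' : i < m := Finset.mem_range.mp hi
      have e1 := abs_le.mp (h (t i) (hb i (by omega)) (hlt i (by omega)))
      have e2 := abs_le.mp (h (t (i + 1)) (hb (i + 1) (by omega)) (hlt (i + 1) (by omega)))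
      exact max_eq_right (by linarith)
    rw [h0, zero_add]
    have e1 := abs_le.mp (h (t m) (hb m (by omega)) (hlt m le_rfl))
    rcases eq_or_lt_of_le (ht.2.1 : t (m + 1) ≤ s') with he | hlt2
    · rw [he]
      refine max_le ?_ (abs_nonneg _)
      have h2 : f s' - f (t m) - c ≤ f s' - l := by linarith
      exact le_trans h2 (le_abs_self _)
    · have e2 := abs_le.mp (h (t (m + 1)) (hb (m + 1) le_rfl) hlt2)
      rw [max_eq_right (by linarith)]
      exact abs_nonneg _

/-- ENNReal assembly of the CORE lemma. -/
lemma utv_le (f : ℝ → ℝ) (c : ℝ) (hc : 0 < c) {a u s : ℝ} (hau : a ≤ u) (hus : u ≤ s)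
    (D : ℝ) (hD : ∀ k r, IsPart u s k r → usum (fun x => -f x) c r k ≤ D) :
    UTVc f c a s ≤ UTVc f c a u + ENNReal.ofReal (D + (f s - f u) + c) := by
  rw [UTVc_eq f c a s]
  refine iSup_le fun n => iSup_le fun t => iSup_le fun ht => ?_
  obtain ⟨m, p, k, r, hp, hr, hle⟩ := core f c hc a u hau n s t hus ht
  have h1 : usum f c t n ≤ usum f c p m + (D + (f s - f u) + c) := by
    have := hD k r hr
    linarith
  calc ENNReal.ofReal (usum f c t n)
      ≤ ENNReal.ofReal (usum f c p m + (D + (f s - f u) + c)) :=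
        ENNReal.ofReal_le_ofReal h1
    _ ≤ ENNReal.ofReal (usum f c p m) + ENNReal.ofReal (D + (f s - f u) + c) :=
        ENNReal.ofReal_add_le
    _ ≤ UTVc f c a u + ENNReal.ofReal (D + (f s - f u) + c) :=
        add_le_add_left (le_UTVc f c a u m p hp) _

/-- Finiteness of the upward truncated variation for a càdlàg function. -/
lemma utv_fin (f : ℝ → ℝ) {a b c : ℝ} (hab : a < b) (hf : Cadlag f a b) (hc : 0 < c) :
    UTVc f c a b ≠ ⊤ := by
  set S : Set ℝ := {x | x ∈ Set.Icc a b ∧ UTVc f c a x ≠ ⊤} with hSdef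
  have haS : a ∈ S := ⟨⟨le_rfl, le_of_lt hab⟩, by rw [UTVc_self]; exact ENNReal.zero_ne_top⟩
  have hne : S.Nonempty := ⟨a, haS⟩
  have hbdd : BddAbove S := ⟨b, fun x hx => hx.1.2⟩
  set m := sSup S with hm
  have ham : a ≤ m := le_csSup hbdd haS
  have hmb : m ≤ b := csSup_le hne fun x hx => hx.1.2
  have claim1 : UTVc f c a m ≠ ⊤ := by
    rcases eq_or_lt_of_le ham with he | hlt
    · rw [← he, UTVc_self]; exact ENNReal.zero_ne_top
    · obtain ⟨l, hl⟩ := hf.2 m ⟨hlt, hmb⟩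
      rw [Metric.tendsto_nhdsWithin_nhds] at hl
      obtain ⟨δ, hδ, hδ2⟩ := hl (c / 4) (by positivity)
      have hmin : 0 < min δ (m - a) := lt_min hδ (by linarith)
      obtain ⟨x, hxS, hx⟩ := exists_lt_of_lt_csSup hne
        (show m - min δ (m - a) < m by linarith)
      have hxm : x ≤ m := le_csSup hbdd hxS
      have hax : a ≤ x := hxS.1.1
      have hosc : ∀ y, x ≤ y → y < m → |(fun z => -f z) y - (-l)| ≤ c / 4 := by
        intro y h1 h2
        have hd : dist (f y) l < c / 4 := by
          refine hδ2 (Set.mem_Iio.mpr h2) ?_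
          rw [Real.dist_eq, abs_of_nonpos (by linarith)]
          have h3 : min δ (m - a) ≤ δ := min_le_left _ _
          linarith
        rw [Real.dist_eq] at hd
        have e : (fun z => -f z) y - (-l) = -(f y - l) := by ring
        rw [e, abs_neg]
        linarith
      have hD := osc_bound (fun z => -f z) hc hosc
      have hle := utv_le f c hc hax hxm _ (fun k r hr => hD k r hr)
      exact ne_top_of_le_ne_top (ENNReal.add_ne_top.mpr ⟨hxS.2, ENNReal.ofReal_ne_top⟩) hle
  by_cases hmb' : m = b
  · rw [← hmb']; exact claim1
  · exfalso
    have hmb2 : m < b := lt_of_le_of_ne hmb hmb'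
    have hrc := hf.1 m ⟨ham, hmb2⟩
    rw [Metric.tendsto_nhdsWithin_nhds] at hrc
    obtain ⟨δ, hδ, hδ2⟩ := hrc (c / 4) (by positivity)
    set s' := min b (m + δ / 2) with hs'
    have hms' : m < s' := lt_min hmb2 (by linarith)
    have hs'b : s' ≤ b := min_le_left _ _
    have hosc : ∀ y, m ≤ y → y < s' → |(fun z => -f z) y - (-(f m))| ≤ c / 4 := by
      intro y h1 h2
      rcases eq_or_lt_of_le h1 with he | h1'
      · rw [← he]; simpa using (by positivity : (0:ℝ) ≤ c / 4)
      · have hd : dist (f y) (f m) < c / 4 := by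
          refine hδ2 (Set.mem_Ioi.mpr h1') ?_
          rw [Real.dist_eq, abs_of_nonneg (by linarith)]
          have : y < m + δ / 2 := lt_of_lt_of_le h2 (min_le_right _ _)
          linarith
        rw [Real.dist_eq] at hd
        have e : (fun z => -f z) y - (-(f m)) = -(f y - f m) := by ring
        rw [e, abs_neg]
        linarith
    have hD := osc_bound (fun z => -f z) hc hosc
    have hle := utv_le f c hc ham (le_of_lt hms') _ (fun k r hr => hD k r hr)
    have hfin : UTVc f c a s' ≠ ⊤ :=
      ne_top_of_le_ne_top (ENNReal.add_ne_top.mpr ⟨claim1, ENNReal.ofReal_ne_top⟩) hle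
    have hs'S : s' ∈ S := ⟨⟨le_trans ham (le_of_lt hms'), hs'b⟩, hfin⟩
    exact absurd (le_csSup hbdd hs'S) (not_le.mpr hms')

/-- One-sided real inequality. -/
lemma main1 (f g : ℝ → ℝ) (hg : g = fun x => -f x) (c : ℝ) (hc : 0 < c)
    {a u s : ℝ} (hau : a ≤ u) (hus : u ≤ s)
    (hU : UTVc f c a s ≠ ⊤) (hD : UTVc g c a s ≠ ⊤) :
    (UTVc f c a s).toReal ≤ (UTVc f c a u).toReal +
      ((UTVc g c a s).toReal - (UTVc g c a u).toReal) + (f s - f u) + c := by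
  have hUu : UTVc f c a u ≠ ⊤ := ne_top_of_le_ne_top hU (UTVc_mono f c a hus)
  have hDu : UTVc g c a u ≠ ⊤ := ne_top_of_le_ne_top hD (UTVc_mono g c a hus)
  set B := (UTVc f c a u).toReal +
      ((UTVc g c a s).toReal - (UTVc g c a u).toReal) + (f s - f u) + c with hB
  have key : ∀ n t, IsPart a s n t → usum f c t n ≤ B := by
    intro n t ht
    obtain ⟨m, p, k, r, hp, hr, hle⟩ := core f c hc a u hau n s t hus ht
    have h1 : usum f c p m ≤ (UTVc f c a u).toReal := by
      have h := le_UTVc f c a u m p hp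
      have := ENNReal.toReal_mono hUu h
      rwa [ENNReal.toReal_ofReal (usum_nonneg f c p m)] at this
    have hrs : IsPart a s k r := ⟨le_trans hau hr.1, hr.2.1, hr.2.2⟩
    have h2a : usum g c r k ≤ (UTVc g c a s).toReal := by
      have h := le_UTVc g c a s k r hrs
      have := ENNReal.toReal_mono hD h
      rwa [ENNReal.toReal_ofReal (usum_nonneg g c r k)] at this
    have h2 : (UTVc g c a u).toReal + usum g c r k ≤ (UTVc g c a s).toReal := by
      have hle2 : UTVc g c a u
          ≤ ENNReal.ofReal ((UTVc g c a s).toReal - usum g c r k) := by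
        rw [UTVc_eq]
        refine iSup_le fun m' => iSup_le fun q => iSup_le fun hq => ?_
        obtain ⟨N, Q, hQ, _, hcq⟩ := concat g c hau hus m' q hq k r hr
        have hQs : usum g c Q N ≤ (UTVc g c a s).toReal := by
          have h := le_UTVc g c a s N Q hQ
          have := ENNReal.toReal_mono hD h
          rwa [ENNReal.toReal_ofReal (usum_nonneg g c Q N)] at this
        exact ENNReal.ofReal_le_ofReal (by linarith)
      have h3 := ENNReal.toReal_mono ENNReal.ofReal_ne_top hle2
      rw [ENNReal.toReal_ofReal (by linarith)] at h3
      linarith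
    have hgr : usum (fun x => -f x) c r k = usum g c r k := by rw [hg]
    rw [hgr] at hle
    linarith
  have hB0 : 0 ≤ B := by
    have := key 0 (fun _ => a)
      ⟨le_rfl, le_trans hau hus, fun i hi => absurd hi (Nat.not_lt_zero i)⟩
    rwa [usum_zero] at this
  have hfin : UTVc f c a s ≤ ENNReal.ofReal B := by
    rw [UTVc_eq]
    refine iSup_le fun n => iSup_le fun t => iSup_le fun ht => ?_
    exact ENNReal.ofReal_le_ofReal (key n t ht)
  have := ENNReal.toReal_mono ENNReal.ofReal_ne_top hfin
  rwa [ENNReal.toReal_ofReal hB0] at this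

end Aux

/-- The increments of `s ↦ UTV^c(f,[a,s]) − DTV^c(f,[a,s])` uniformly
approximate the increments of `f` with accuracy `c`. -/

theorem increments_approx (a b : ℝ) (hab : a < b) (f : ℝ → ℝ)
    (hf : Cadlag f a b) (c : ℝ) (hc : 0 < c) :
    ∀ u s : ℝ, a ≤ u → u ≤ s → s ≤ b →
      |(((UTVc f c a s).toReal - (DTVc f c a s).toReal) -
        ((UTVc f c a u).toReal - (DTVc f c a u).toReal)) - (f s - f u)| ≤ c := by
  intro u s hau hus hsb
  have hfn : Cadlag (fun x => -f x) a b := by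
    constructor
    · intro t ht
      exact (hf.1 t ht).neg
    · intro t ht
      obtain ⟨l, hl⟩ := hf.2 t ht
      exact ⟨-l, hl.neg⟩
  have hU : UTVc f c a b ≠ ⊤ := utv_fin f hab hf hc
  have hD : UTVc (fun x => -f x) c a b ≠ ⊤ := utv_fin _ hab hfn hc
  have hUs : UTVc f c a s ≠ ⊤ := ne_top_of_le_ne_top hU (UTVc_mono f c a hsb)
  have hDs : UTVc (fun x => -f x) c a s ≠ ⊤ :=
    ne_top_of_le_ne_top hD (UTVc_mono _ c a hsb)
  have h1 := main1 f (fun x => -f x) rfl c hc hau hus hUs hDs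
  have h2 := main1 (fun x => -f x) f (by funext x; simp) c hc hau hus hDs hUs
  rw [DTVc_eq f c a s, DTVc_eq f c a u, abs_le]
  constructor
  · linarith
  · linarith
end
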